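/- arXiv:2305.20074 — 5 statements merged into one kernel-verified Lean document; each statement's English description precedes it below -/
import Mathlib

section
/- Let X and Y be finite types and let p be a joint pmf on X × Y whose marginals p_X and p_Y are everywhere positive. Define the normalized joint matrix Q ∈ ℝ^{X × Y} by Q(x, y) = p(x, y) / √(p_X(x) p_Y(y)). Then the operator norm of Q (as a linear map from ℝ^Y to ℝ^X with Euclidean norms) is at most 1; equivalently, every singular value of Q lies in the interval [0, 1], i.e., I − QᵀQ is positive semidefinite. -/
open Finset Matrix

/-- Marginal pmf of the first coordinate of a joint pmf on `X × Y`. -/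
noncomputable def margX {X Y : Type*} [Fintype Y] (p : X × Y → ℝ) (x : X) : ℝ :=
  ∑ y, p (x, y)

/-- Marginal pmf of the second coordinate of a joint pmf on `X × Y`. -/
noncomputable def margY {X Y : Type*} [Fintype X] (p : X × Y → ℝ) (y : Y) : ℝ :=
  ∑ x, p (x, y)

/-- The Euclidean norm of a finitely indexed real vector. -/
noncomputable def euclNorm {n : Type*} [Fintype n] (v : n → ℝ) : ℝ :=
  Real.sqrt (∑ i, v i ^ 2)

/-- For a joint pmf `p` on finite `X × Y` with everywhere-positive
marginals, the normalized joint matrix `Q(x,y) = p(x,y)/√(p_X(x) p_Y(y))` has operator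
norm at most one (w.r.t. Euclidean norms); equivalently every singular value of `Q`
lies in `[0, 1]`, i.e. `I − QᵀQ` is positive semidefinite. -/
theorem normalized_joint_operator_norm_le_one {X Y : Type*} [Fintype X] [Fintype Y]
    [DecidableEq Y]
    (p : X × Y → ℝ) (hp0 : ∀ z, 0 ≤ p z) (hp1 : ∑ z : X × Y, p z = 1)
    (hX : ∀ x, 0 < margX p x) (hY : ∀ y, 0 < margY p y)
    (Q : Matrix X Y ℝ)
    (hQ : ∀ x y, Q x y = p (x, y) / Real.sqrt (margX p x * margY p y)) :
    (∀ w : Y → ℝ, euclNorm (Q.mulVec w) ≤ euclNorm w) ∧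
    ((1 : Matrix Y Y ℝ) - Qᵀ * Q).PosSemidef := by
  have key : ∀ w : Y → ℝ, ∑ x, (Q.mulVec w) x ^ 2 ≤ ∑ y, w y ^ 2 := by
    intro w
    have hstep : ∀ x, (Q.mulVec w) x ^ 2 ≤ ∑ y, p (x, y) / margY p y * w y ^ 2 := by
      intro x
      have hrw : (Q.mulVec w) x = ∑ y, Real.sqrt (p (x, y) / margX p x) *
          (Real.sqrt (p (x, y) / margY p y) * w y) := by
        simp only [Matrix.mulVec, dotProduct, hQ]
        refine Finset.sum_congr rfl fun y _ => ?_
        rw [← mul_assoc]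
        congr 1
        rw [← Real.sqrt_mul (div_nonneg (hp0 _) (hX x).le), div_mul_div_comm, ← sq,
          Real.sqrt_div (sq_nonneg _), Real.sqrt_sq (hp0 _)]
      have hCS := Finset.sum_mul_sq_le_sq_mul_sq Finset.univ
        (fun y => Real.sqrt (p (x, y) / margX p x))
        (fun y => Real.sqrt (p (x, y) / margY p y) * w y)
      have h1 : ∑ y, Real.sqrt (p (x, y) / margX p x) ^ 2 = 1 := by
        have : ∀ y, Real.sqrt (p (x, y) / margX p x) ^ 2 = p (x, y) / margX p x :=
          fun y => Real.sq_sqrt (div_nonneg (hp0 _) (hX x).le)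
        simp only [this, ← Finset.sum_div]
        exact div_self (hX x).ne'
      have h2 : ∀ y, (Real.sqrt (p (x, y) / margY p y) * w y) ^ 2
          = p (x, y) / margY p y * w y ^ 2 := by
        intro y
        rw [mul_pow, Real.sq_sqrt (div_nonneg (hp0 _) (hY y).le)]
      rw [hrw]
      calc (∑ y, Real.sqrt (p (x, y) / margX p x) *
              (Real.sqrt (p (x, y) / margY p y) * w y)) ^ 2
          ≤ (∑ y, Real.sqrt (p (x, y) / margX p x) ^ 2) *
              ∑ y, (Real.sqrt (p (x, y) / margY p y) * w y) ^ 2 := hCS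
        _ = ∑ y, p (x, y) / margY p y * w y ^ 2 := by
            rw [h1, one_mul]; exact Finset.sum_congr rfl fun y _ => h2 y
    calc ∑ x, (Q.mulVec w) x ^ 2 ≤ ∑ x, ∑ y, p (x, y) / margY p y * w y ^ 2 :=
          Finset.sum_le_sum fun x _ => hstep x
      _ = ∑ y, w y ^ 2 := by
          rw [Finset.sum_comm]
          refine Finset.sum_congr rfl fun y _ => ?_
          simp only [div_mul_eq_mul_div, ← Finset.sum_div, ← Finset.sum_mul]
          rw [show (∑ x, p (x, y)) = margY p y from rfl, mul_comm,
            mul_div_assoc, div_self (hY y).ne', mul_one]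
  constructor
  · intro w
    unfold euclNorm
    exact Real.sqrt_le_sqrt (key w)
  · refine Matrix.posSemidef_iff_dotProduct_mulVec.mpr ⟨?_, ?_⟩
    · have : (Qᵀ * Q).IsHermitian := by
        have := Matrix.isHermitian_conjTranspose_mul_self Q
        simpa [Matrix.conjTranspose_eq_transpose_of_trivial] using this
      simpa [Matrix.IsHermitian, Matrix.conjTranspose, sub_eq_iff_eq_add] using
        Matrix.IsHermitian.sub (Matrix.isHermitian_one) this
    · intro v
      have hcalc : star v ⬝ᵥ ((1 - Qᵀ * Q) *ᵥ v)
          = ∑ y, v y ^ 2 - ∑ x, (Q.mulVec v) x ^ 2 := by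
        have h1 : v ⬝ᵥ (Qᵀ *ᵥ (Q *ᵥ v)) = (Q *ᵥ v) ⬝ᵥ (Q *ᵥ v) := by
          rw [Matrix.dotProduct_mulVec, Matrix.vecMul_transpose]
        simp only [star_trivial, Matrix.sub_mulVec, Matrix.one_mulVec,
          dotProduct_sub, ← Matrix.mulVec_mulVec, h1]
        simp [dotProduct, sq]
      rw [hcalc]
      exact sub_nonneg.mpr (key v)
end

section
/- Let X and Y be finite types and let p be a joint pmf on X × Y whose marginals p_X and p_Y are everywhere positive. Define Q(x, y) = p(x, y) / √(p_X(x) p_Y(y)). Then the following are equivalent: (i) X and Y are independent, i.e., p(x, y) = p_X(x) p_Y(y) for all (x, y); (ii) Q equals the rank-one matrix u vᵀ where u(x) = √(p_X(x)) and v(y) = √(p_Y(y)); (iii) all singular values of Q other than the single top singular value 1 are equal to 0. -/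
open Finset Matrix

/-- The `i`-th largest singular value (0-indexed, listed with multiplicity in
decreasing order) of a real matrix, via the Courant–Fischer max-min
characterization. -/
noncomputable def nthSingularValue {m n : Type*} [Fintype m] [Fintype n]
    (M : Matrix m n ℝ) (i : ℕ) : ℝ :=
  sSup {t : ℝ | ∃ V : Submodule ℝ (n → ℝ), Module.finrank ℝ ↥V = i + 1 ∧
    ∀ v ∈ V, t * euclNorm v ≤ euclNorm (M.mulVec v)}

lemma en_nonneg {n : Type*} [Fintype n] (w : n → ℝ) : 0 ≤ euclNorm w := Real.sqrt_nonneg _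

lemma en_sq {n : Type*} [Fintype n] (w : n → ℝ) : euclNorm w ^ 2 = ∑ i, w i ^ 2 :=
  Real.sq_sqrt (Finset.sum_nonneg fun i _ => sq_nonneg _)

lemma en_pos {n : Type*} [Fintype n] {w : n → ℝ} (h : w ≠ 0) : 0 < euclNorm w := by
  obtain ⟨i, hi⟩ := Function.ne_iff.1 h
  exact Real.sqrt_pos.2 (Finset.sum_pos' (fun j _ => sq_nonneg _)
    ⟨i, Finset.mem_univ i, by have : w i ^ 2 ≠ 0 := pow_ne_zero _ hi; positivity⟩)

lemma en_zero {n : Type*} [Fintype n] : euclNorm (0 : n → ℝ) = 0 := by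
  simp [euclNorm]

lemma en_le_en {n m : Type*} [Fintype n] [Fintype m] {a : n → ℝ} {b : m → ℝ}
    (h : ∑ i, a i ^ 2 ≤ ∑ j, b j ^ 2) : euclNorm a ≤ euclNorm b :=
  Real.sqrt_le_sqrt h

lemma le_en_of_sq_le {n m : Type*} [Fintype n] [Fintype m] {t : ℝ} (ht : 0 ≤ t)
    {a : n → ℝ} {b : m → ℝ}
    (h : t ^ 2 * ∑ i, a i ^ 2 ≤ ∑ j, b j ^ 2) : t * euclNorm a ≤ euclNorm b := by
  have h2 := Real.sqrt_le_sqrt h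
  rwa [Real.sqrt_mul (sq_nonneg t), Real.sqrt_sq ht] at h2

lemma en_smul {n : Type*} [Fintype n] (c : ℝ) (w : n → ℝ) :
    euclNorm (c • w) = |c| * euclNorm w := by
  unfold euclNorm
  rw [← Real.sqrt_sq_eq_abs, ← Real.sqrt_mul (sq_nonneg c)]
  congr 1
  rw [Finset.mul_sum]
  exact Finset.sum_congr rfl fun i _ => by simp [mul_pow]

/-- For a joint pmf `p` on finite `X × Y` with everywhere-positive
marginals and normalized joint matrix `Q(x,y) = p(x,y)/√(p_X(x) p_Y(y))`, the
following are equivalent: (i) `X` and `Y` are independent; (ii) `Q` is the rank-one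
matrix `u vᵀ` with `u = √p_X`, `v = √p_Y`; (iii) all singular values of `Q` other than
the single top singular value `1` vanish. -/
theorem independence_iff_rank_one {X Y : Type*} [Fintype X] [Fintype Y]
    (p : X × Y → ℝ) (hp0 : ∀ z, 0 ≤ p z) (hp1 : ∑ z : X × Y, p z = 1)
    (hX : ∀ x, 0 < margX p x) (hY : ∀ y, 0 < margY p y)
    (Q : Matrix X Y ℝ)
    (hQ : ∀ x y, Q x y = p (x, y) / Real.sqrt (margX p x * margY p y))
    (u : X → ℝ) (v : Y → ℝ)
    (hu : ∀ x, u x = Real.sqrt (margX p x)) (hv : ∀ y, v y = Real.sqrt (margY p y)) :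
    ((∀ x y, p (x, y) = margX p x * margY p y) ↔ Q = vecMulVec u v) ∧
    ((Q = vecMulVec u v) ↔
      nthSingularValue Q 0 = 1 ∧ ∀ i : ℕ, 1 ≤ i → nthSingularValue Q i = 0) := by
  classical
  -- nonemptiness
  have hne : Nonempty (X × Y) := by
    by_contra h
    rw [not_nonempty_iff] at h
    simp at hp1
  have hXne : Nonempty X := ⟨hne.some.1⟩
  have hYne : Nonempty Y := ⟨hne.some.2⟩
  -- basic positivity facts
  have hupos : ∀ x, 0 < u x := fun x => by rw [hu]; exact Real.sqrt_pos.2 (hX x)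
  have hvpos : ∀ y, 0 < v y := fun y => by rw [hv]; exact Real.sqrt_pos.2 (hY y)
  have hsq_u : ∀ x, u x ^ 2 = margX p x := fun x => by
    rw [hu, Real.sq_sqrt (hX x).le]
  have hsq_v : ∀ y, v y ^ 2 = margY p y := fun y => by
    rw [hv, Real.sq_sqrt (hY y).le]
  have hsX : ∑ x, margX p x = 1 := by
    rw [← hp1, Fintype.sum_prod_type]; rfl
  have hsY : ∑ y, margY p y = 1 := by
    rw [← hp1, Fintype.sum_prod_type_right]; rfl
  have hnu : ∑ x, u x ^ 2 = 1 := by simp_rw [hsq_u]; exact hsX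
  have hnv : ∑ y, v y ^ 2 = 1 := by simp_rw [hsq_v]; exact hsY
  have hQ' : ∀ x y, Q x y = p (x, y) / (u x * v y) := fun x y => by
    rw [hQ, Real.sqrt_mul (hX x).le, hu, hv]
  have hmv : ∀ (M : Matrix X Y ℝ) (w : Y → ℝ) x, M.mulVec w x = ∑ y, M x y * w y :=
    fun _ _ _ => rfl
  -- Q v = u
  have hQv : Q.mulVec v = u := by
    funext x
    rw [hmv]
    have h1 : ∀ y ∈ Finset.univ, Q x y * v y = p (x, y) / u x := fun y _ => by
      rw [hQ' x y, div_mul_eq_mul_div, mul_div_mul_right _ _ (hvpos y).ne']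
    rw [Finset.sum_congr rfl h1, ← Finset.sum_div]
    rw [show (∑ y, p (x, y)) = margX p x from rfl, ← hsq_u, sq]
    field_simp
  -- uᵀ Q = v
  have huQ : ∀ y, ∑ x, u x * Q x y = v y := by
    intro y
    have h1 : ∀ x ∈ Finset.univ, u x * Q x y = p (x, y) / v y := fun x _ => by
      rw [hQ' x y, mul_div_assoc', mul_div_mul_left _ _ (hupos x).ne']
    rw [Finset.sum_congr rfl h1, ← Finset.sum_div]
    rw [show (∑ x, p (x, y)) = margY p y from rfl, ← hsq_v, sq]
    field_simp
  -- contraction: ‖Q w‖ ≤ ‖w‖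
  have hcontr : ∀ w : Y → ℝ, euclNorm (Q.mulVec w) ≤ euclNorm w := by
    intro w
    apply en_le_en
    have hrow : ∀ x, (Q.mulVec w x) ^ 2 ≤ ∑ y, p (x, y) * w y ^ 2 / margY p y := by
      intro x
      have hfg : ∀ y ∈ Finset.univ, Q x y * w y =
          (Real.sqrt (p (x, y)) / u x) * (Real.sqrt (p (x, y)) * w y / v y) := by
        intro y _
        rw [hQ' x y]
        conv_lhs => rw [← Real.mul_self_sqrt (hp0 (x, y))]
        ring
      have hcs := Finset.sum_mul_sq_le_sq_mul_sq Finset.univ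
        (fun y => Real.sqrt (p (x, y)) / u x) (fun y => Real.sqrt (p (x, y)) * w y / v y)
      have hf2 : ∑ y, (Real.sqrt (p (x, y)) / u x) ^ 2 = 1 := by
        have h3 : ∀ y ∈ Finset.univ, (Real.sqrt (p (x, y)) / u x) ^ 2 = p (x, y) / margX p x := by
          intro y _
          rw [div_pow, Real.sq_sqrt (hp0 (x, y)), hsq_u]
        rw [Finset.sum_congr rfl h3, ← Finset.sum_div,
          show (∑ y, p (x, y)) = margX p x from rfl]
        exact div_self (hX x).ne'
      have hg2 : ∀ y ∈ Finset.univ,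
          (Real.sqrt (p (x, y)) * w y / v y) ^ 2 = p (x, y) * w y ^ 2 / margY p y := by
        intro y _
        rw [div_pow, mul_pow, Real.sq_sqrt (hp0 (x, y)), hsq_v]
      rw [hmv, Finset.sum_congr rfl hfg]
      calc (∑ y, (Real.sqrt (p (x, y)) / u x) * (Real.sqrt (p (x, y)) * w y / v y)) ^ 2
          ≤ (∑ y, (Real.sqrt (p (x, y)) / u x) ^ 2) *
            ∑ y, (Real.sqrt (p (x, y)) * w y / v y) ^ 2 := hcs
        _ = ∑ y, p (x, y) * w y ^ 2 / margY p y := by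
            rw [hf2, one_mul, Finset.sum_congr rfl hg2]
    calc ∑ x, (Q.mulVec w x) ^ 2
        ≤ ∑ x, ∑ y, p (x, y) * w y ^ 2 / margY p y :=
          Finset.sum_le_sum fun x _ => hrow x
      _ = ∑ y, w y ^ 2 := by
          rw [Finset.sum_comm]
          refine Finset.sum_congr rfl fun y _ => ?_
          simp_rw [mul_div_assoc]
          rw [← Finset.sum_mul, show (∑ x, p (x, y)) = margY p y from rfl,
            ← mul_div_assoc, mul_div_cancel_left₀ _ (hY y).ne']
  -- the sets of the Courant-Fischer characterization
  set S : ℕ → Set ℝ := fun i =>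
    {t : ℝ | ∃ V : Submodule ℝ (Y → ℝ), Module.finrank ℝ ↥V = i + 1 ∧
      ∀ w ∈ V, t * euclNorm w ≤ euclNorm (Q.mulVec w)} with hSdef
  have hσ : ∀ i, nthSingularValue Q i = sSup (S i) := fun i => rfl
  -- upper bound 1 on every S i
  have hub : ∀ i : ℕ, ∀ t ∈ S i, t ≤ 1 := by
    rintro i t ⟨V, hV, hle⟩
    have hVnt : Nontrivial V := by
      apply Module.nontrivial_of_finrank_pos (R := ℝ)
      omega
    obtain ⟨⟨w, hwV⟩, hw0⟩ := exists_ne (0 : V)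
    have hwne : w ≠ 0 := fun h => hw0 (Subtype.ext h)
    have h1 := (hle w hwV).trans (hcontr w)
    have h2 := en_pos hwne
    nlinarith
  have hbdd : ∀ i, BddAbove (S i) := fun i => ⟨1, hub i⟩
  -- top singular value is 1 (always)
  have hvne : v ≠ 0 := fun h => absurd (congrFun h hYne.some) (hvpos hYne.some).ne'
  have henu : euclNorm u = 1 := by unfold euclNorm; rw [hnu, Real.sqrt_one]
  have henv : euclNorm v = 1 := by unfold euclNorm; rw [hnv, Real.sqrt_one]
  have hσ0 : nthSingularValue Q 0 = 1 := by
    rw [hσ]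
    refine le_antisymm (Real.sSup_le (hub 0) zero_le_one) ?_
    apply le_csSup (hbdd 0)
    refine ⟨Submodule.span ℝ {v}, finrank_span_singleton hvne, ?_⟩
    intro w hw
    obtain ⟨c, rfl⟩ := Submodule.mem_span_singleton.1 hw
    rw [Matrix.mulVec_smul, hQv, en_smul, en_smul, henu, henv]
    simp
  -- Part A: independence iff rank one
  have partA : (∀ x y, p (x, y) = margX p x * margY p y) ↔ Q = vecMulVec u v := by
    constructor
    · intro h
      ext x y
      rw [hQ' x y, vecMulVec_apply, h x y, ← hsq_u, ← hsq_v]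
      rw [div_eq_iff (mul_pos (hupos x) (hvpos y)).ne']
      ring
    · intro h x y
      have h2 : u x * v y = p (x, y) / (u x * v y) := by
        rw [← hQ' x y, h, vecMulVec_apply]
      have h3 : p (x, y) = (u x * v y) * (u x * v y) := by
        rw [eq_div_iff (mul_pos (hupos x) (hvpos y)).ne'] at h2
        linarith
      rw [h3, ← hsq_u, ← hsq_v]
      ring
  -- rank one implies vanishing lower singular values
  have hzero : Q = vecMulVec u v → ∀ i : ℕ, 1 ≤ i → nthSingularValue Q i = 0 := by
    intro hQuv i hi
    rw [hσ]
    have hub0 : ∀ t ∈ S i, t ≤ 0 := by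
      rintro t ⟨V, hV, hle⟩
      let f : (Y → ℝ) →ₗ[ℝ] ℝ :=
        { toFun := fun w => ∑ y, v y * w y
          map_add' := fun a b => by
            simp only [Pi.add_apply, mul_add]
            rw [Finset.sum_add_distrib]
          map_smul' := fun c a => by
            simp only [Pi.smul_apply, smul_eq_mul, RingHom.id_apply]
            rw [Finset.mul_sum]
            exact Finset.sum_congr rfl fun y _ => by ring }
      let g := f.comp V.subtype
      have hker : 0 < Module.finrank ℝ (LinearMap.ker g) := by
        have h1 := LinearMap.finrank_range_add_finrank_ker g
        have h2 : Module.finrank ℝ (LinearMap.range g) ≤ 1 := by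
          simpa using Submodule.finrank_le (LinearMap.range g)
        rw [hV] at h1
        omega
      have : Nontrivial (LinearMap.ker g) := Module.nontrivial_of_finrank_pos hker
      obtain ⟨z, hz0⟩ := exists_ne (0 : LinearMap.ker g)
      set w : Y → ℝ := ((z : ↥V) : Y → ℝ) with hwdef
      have hwV : w ∈ V := (z : ↥V).2
      have hwne : w ≠ 0 := fun h => hz0 (Subtype.ext (Subtype.ext h))
      have hdot : ∑ y, v y * w y = 0 := LinearMap.mem_ker.1 z.2
      have hQw : Q.mulVec w = 0 := by
        funext x
        rw [hQuv, hmv]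
        have : ∀ y ∈ Finset.univ, vecMulVec u v x y * w y = u x * (v y * w y) := fun y _ => by
          rw [vecMulVec_apply]; ring
        rw [Finset.sum_congr rfl this, ← Finset.mul_sum, hdot, mul_zero]
        rfl
      have h4 := hle w hwV
      rw [hQw, en_zero] at h4
      nlinarith [en_pos hwne]
    rcases (S i).eq_empty_or_nonempty with he | hne'
    · rw [he, Real.sSup_empty]
    · obtain ⟨t0, V0, hV0, _⟩ := hne'
      have h0 : (0 : ℝ) ∈ S i :=
        ⟨V0, hV0, fun w _ => by rw [zero_mul]; exact en_nonneg _⟩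
      exact le_antisymm (Real.sSup_le hub0 le_rfl) (le_csSup (hbdd i) h0)
  -- vanishing lower singular values implies rank one
  have hback : (∀ i : ℕ, 1 ≤ i → nthSingularValue Q i = 0) → Q = vecMulVec u v := by
    intro h2
    have hS1 : sSup (S 1) = 0 := by rw [← hσ 1]; exact h2 1 le_rfl
    have key : ∀ w : Y → ℝ, (∑ y, v y * w y) = 0 → Q.mulVec w = 0 := by
      intro w hw
      by_contra hQw
      have hw0 : w ≠ 0 := by rintro rfl; exact hQw (Matrix.mulVec_zero Q)
      have henw : 0 < euclNorm w := en_pos hw0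
      have hc : 0 < euclNorm (Q.mulVec w) := en_pos hQw
      have hli : LinearIndependent ℝ ![v, w] := by
        rw [LinearIndependent.pair_iff]
        intro s t hst
        have h3 : ∑ y, v y * (s • v + t • w) y = 0 := by rw [hst]; simp
        have h4 : ∑ y, v y * (s • v + t • w) y = s := by
          have h5 : ∀ y ∈ Finset.univ, v y * (s • v + t • w) y
              = s * v y ^ 2 + t * (v y * w y) := fun y _ => by
            simp only [Pi.add_apply, Pi.smul_apply, smul_eq_mul]; ring
          rw [Finset.sum_congr rfl h5, Finset.sum_add_distrib, ← Finset.mul_sum,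
            ← Finset.mul_sum, hnv, hw, mul_one, mul_zero, add_zero]
        have hs : s = 0 := by rw [← h4, h3]
        have ht : t = 0 := by
          rw [hs, zero_smul, zero_add] at hst
          rcases smul_eq_zero.1 hst with h | h
          · exact h
          · exact absurd h hw0
        exact ⟨hs, ht⟩
      have hV2 : Module.finrank ℝ ↥(Submodule.span ℝ ({v, w} : Set (Y → ℝ))) = 2 := by
        have h5 := finrank_span_eq_card hli
        have h6 : Set.range ![v, w] = {v, w} := by
          ext z
          simp [Fin.exists_fin_two, or_comm]
        rw [h6] at h5
        rw [h5]
        simp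
      set t : ℝ := min 1 (euclNorm (Q.mulVec w) / euclNorm w) with htdef
      have ht0 : 0 < t := lt_min one_pos (div_pos hc henw)
      have hudot : ∑ x, u x * Q.mulVec w x = 0 := by
        have h5 : ∀ x ∈ Finset.univ, u x * Q.mulVec w x
            = ∑ y, (u x * Q x y) * w y := fun x _ => by
          rw [hmv, Finset.mul_sum]
          exact Finset.sum_congr rfl fun y _ => by ring
        rw [Finset.sum_congr rfl h5, Finset.sum_comm]
        have h6 : ∀ y ∈ Finset.univ, (∑ x, (u x * Q x y) * w y) = v y * w y := fun y _ => by
          rw [← Finset.sum_mul, huQ]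
        rw [Finset.sum_congr rfl h6, hw]
      have hmem : t ∈ S 1 := by
        refine ⟨Submodule.span ℝ ({v, w} : Set (Y → ℝ)), hV2, ?_⟩
        intro z hz
        obtain ⟨a, b, rfl⟩ := Submodule.mem_span_pair.1 hz
        apply le_en_of_sq_le ht0.le
        have hz2 : ∑ y, ((a • v + b • w) y) ^ 2 = a ^ 2 + b ^ 2 * ∑ y, w y ^ 2 := by
          have h5 : ∀ y ∈ Finset.univ, ((a • v + b • w) y) ^ 2
              = a ^ 2 * v y ^ 2 + b ^ 2 * w y ^ 2 + 2 * a * b * (v y * w y) := fun y _ => by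
            simp only [Pi.add_apply, Pi.smul_apply, smul_eq_mul]; ring
          rw [Finset.sum_congr rfl h5, Finset.sum_add_distrib, Finset.sum_add_distrib,
            ← Finset.mul_sum, ← Finset.mul_sum, ← Finset.mul_sum, hnv, hw, mul_one,
            mul_zero, add_zero]
        have hQz : Q.mulVec (a • v + b • w) = a • u + b • Q.mulVec w := by
          rw [Matrix.mulVec_add, Matrix.mulVec_smul, Matrix.mulVec_smul, hQv]
        have hQz2 : ∑ x, (Q.mulVec (a • v + b • w) x) ^ 2
            = a ^ 2 + b ^ 2 * ∑ x, (Q.mulVec w x) ^ 2 := by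
          rw [hQz]
          have h5 : ∀ x ∈ Finset.univ, ((a • u + b • Q.mulVec w) x) ^ 2
              = a ^ 2 * u x ^ 2 + b ^ 2 * (Q.mulVec w x) ^ 2
                + 2 * a * b * (u x * Q.mulVec w x) := fun x _ => by
            simp only [Pi.add_apply, Pi.smul_apply, smul_eq_mul]; ring
          rw [Finset.sum_congr rfl h5, Finset.sum_add_distrib, Finset.sum_add_distrib,
            ← Finset.mul_sum, ← Finset.mul_sum, ← Finset.mul_sum, hnu, hudot, mul_one,
            mul_zero, add_zero]
        rw [hz2, hQz2]
        have ht1 : t ≤ 1 := min_le_left _ _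
        have ht2 : t * euclNorm w ≤ euclNorm (Q.mulVec w) := by
          calc t * euclNorm w ≤ (euclNorm (Q.mulVec w) / euclNorm w) * euclNorm w :=
                mul_le_mul_of_nonneg_right (min_le_right _ _) (en_nonneg w)
            _ = euclNorm (Q.mulVec w) := div_mul_cancel₀ _ henw.ne'
        have ht2' : t ^ 2 * ∑ y, w y ^ 2 ≤ ∑ x, (Q.mulVec w x) ^ 2 := by
          have h6 : (t * euclNorm w) ^ 2 ≤ (euclNorm (Q.mulVec w)) ^ 2 :=
            pow_le_pow_left₀ (by positivity) ht2 2
          rw [mul_pow, en_sq, en_sq] at h6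
          exact h6
        nlinarith [sq_nonneg a, sq_nonneg b, mul_le_mul_of_nonneg_left ht2' (sq_nonneg b),
          mul_le_mul_of_nonneg_right (mul_le_one₀ ht1 ht0.le ht1) (sq_nonneg a)]
      have h7 := le_csSup (hbdd 1) hmem
      rw [hS1] at h7
      linarith
    have hkey2 : ∀ w : Y → ℝ, Q.mulVec w = (∑ y, v y * w y) • u := by
      intro w
      set c : ℝ := ∑ y, v y * w y with hcdef
      have hwc : ∑ y, v y * (w - c • v) y = 0 := by
        have h5 : ∀ y ∈ Finset.univ, v y * (w - c • v) y
            = v y * w y - c * v y ^ 2 := fun y _ => by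
          simp only [Pi.sub_apply, Pi.smul_apply, smul_eq_mul]; ring
        rw [Finset.sum_congr rfl h5, Finset.sum_sub_distrib, ← Finset.mul_sum, hnv, mul_one,
          ← hcdef, sub_self]
      have h8 : Q.mulVec (w - c • v) = Q.mulVec w - c • u := by
        rw [Matrix.mulVec_sub, Matrix.mulVec_smul, hQv]
      rw [key _ hwc] at h8
      exact sub_eq_zero.1 h8.symm
    ext x y
    have h7 := congrFun (hkey2 (Pi.single y 1)) x
    have h8 : Q.mulVec (Pi.single y 1) x = Q x y := by
      rw [hmv]
      simp [Pi.single_apply, mul_ite]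
    have h9 : (∑ y', v y' * Pi.single (M := fun _ : Y => ℝ) y 1 y') = v y := by
      simp [Pi.single_apply, mul_ite]
    rw [h8, h9] at h7
    rw [h7, vecMulVec_apply, Pi.smul_apply, smul_eq_mul]
    ring
  exact ⟨partA, ⟨fun h => ⟨hσ0, hzero h⟩, fun h => hback h.2⟩⟩
end

section
/- Let X and Y be finite types and let p be a joint pmf on X × Y whose marginals p_X and p_Y are everywhere positive. Then there exist an integer N = min(|X|, |Y|), real numbers 1 = σ₁ ≥ σ₂ ≥ … ≥ σ_N ≥ 0, and functions φ₁, …, φ_N : X → ℝ and ψ₁, …, ψ_N : Y → ℝ such that: (i) the density ratio decomposes as p(x, y) / (p_X(x) p_Y(y)) = ∑_{k=1}^N √(σ_k) φ_k(x) ψ_k(y) for all (x, y); (ii) the φ_k are orthonormal in L²(p_X), i.e., ∑_x p_X(x) φ_k(x) φ_{k'}(x) equals 1 if k = k' and 0 otherwise; (iii) the ψ_k are orthonormal in L²(p_Y), i.e., ∑_y p_Y(y) ψ_k(y) ψ_{k'}(y) equals 1 if k = k' and 0 otherwise. -/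
open Finset Matrix

lemma euclid_expand {Y : Type*} [Fintype Y] (b : OrthonormalBasis Y ℝ (EuclideanSpace ℝ Y))
    (v : Y → ℝ) (y : Y) : v y = ∑ i, (∑ y', b i y' * v y') * b i y := by
  have h : ∀ w : EuclideanSpace ℝ Y, w y = ∑ i, (∑ y', b i y' * w y') * b i y := by
    intro w
    conv_lhs => rw [← b.sum_repr w]
    rw [WithLp.ofLp_sum, Finset.sum_apply]
    refine Finset.sum_congr rfl fun i _ => ?_
    rw [b.repr_apply_apply]
    simp [PiLp.inner_apply, RCLike.inner_apply, conj_trivial, mul_comm]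
  exact h (WithLp.toLp 2 v)

theorem aux_svd {X Y : Type*} [Fintype X] [Fintype Y] [Nonempty X] [Nonempty Y]
    (p : X × Y → ℝ) (hp0 : ∀ z, 0 ≤ p z)
    (hX : ∀ x, 0 < margX p x) (hY : ∀ y, 0 < margY p y)
    (hc : Fintype.card Y ≤ Fintype.card X) :
    ∃ σ : Fin (Fintype.card Y) → ℝ,
    ∃ φ : Fin (Fintype.card Y) → X → ℝ,
    ∃ ψ : Fin (Fintype.card Y) → Y → ℝ,
      σ ⟨0, Fintype.card_pos⟩ = 1 ∧
      Antitone σ ∧ (∀ k, 0 ≤ σ k) ∧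
      (∀ x y, p (x, y) / (margX p x * margY p y) =
        ∑ k, Real.sqrt (σ k) * φ k x * ψ k y) ∧
      (∀ k k', ∑ x, margX p x * (φ k x * φ k' x) = if k = k' then (1 : ℝ) else 0) ∧
      (∀ k k', ∑ y, margY p y * (ψ k y * ψ k' y) = if k = k' then (1 : ℝ) else 0) := by
  classical
  set q : X → ℝ := margX p with hqdef
  set r : Y → ℝ := margY p with hrdef
  have hq : ∀ x, 0 < q x := hX
  have hr : ∀ y, 0 < r y := hY
  have hsq : ∀ x, 0 < Real.sqrt (q x) := fun x => Real.sqrt_pos.2 (hq x)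
  have hsr : ∀ y, 0 < Real.sqrt (r y) := fun y => Real.sqrt_pos.2 (hr y)
  have hqsum : ∀ x, ∑ y, p (x, y) = q x := fun x => rfl
  have hrsum : ∀ y, ∑ x, p (x, y) = r y := fun y => rfl
  set B : Matrix X Y ℝ :=
    Matrix.of (fun x y => p (x, y) / (Real.sqrt (q x) * Real.sqrt (r y))) with hBdef
  have hBapp : ∀ x y, B x y = p (x, y) / (Real.sqrt (q x) * Real.sqrt (r y)) := fun _ _ => rfl
  set M : Matrix Y Y ℝ := Bᵀ * B with hMdef
  have hM : M.IsHermitian := by simpa using Matrix.isHermitian_conjTranspose_mul_self B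
  have hMapp : ∀ y y', M y y' = ∑ x, B x y * B x y' := by
    intro y y'; simp [hMdef, Matrix.mul_apply, Matrix.transpose_apply]
  have hMsym : ∀ a b, M a b = M b a := by
    intro a b
    rw [hMapp, hMapp]
    exact Finset.sum_congr rfl fun x _ => mul_comm _ _
  have hvmM : ∀ v : Y → ℝ, v ᵥ* M = M *ᵥ v := by
    intro v
    funext y
    simp only [Matrix.vecMul, Matrix.mulVec, dotProduct]
    exact Finset.sum_congr rfl fun y' _ => by rw [hMsym y' y]; ring
  -- quadratic/cross form
  have key2 : ∀ v w : Y → ℝ, v ⬝ᵥ (M *ᵥ w) = (B *ᵥ v) ⬝ᵥ (B *ᵥ w) := by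
    intro v w
    rw [hMdef, ← Matrix.mulVec_mulVec, Matrix.dotProduct_mulVec, Matrix.vecMul_transpose]
  have hmulVecApp : ∀ (v : Y → ℝ) x, (B *ᵥ v) x = ∑ y, B x y * v y := by
    intro v x; simp [Matrix.mulVec, dotProduct]
  -- eigen data
  have horth : ∀ i j, ∑ y, hM.eigenvectorBasis i y * hM.eigenvectorBasis j y
      = if i = j then (1:ℝ) else 0 := by
    have h := hM.eigenvectorBasis.orthonormal
    rw [orthonormal_iff_ite] at h
    intro i j
    have h2 := h i j
    simp [PiLp.inner_apply, RCLike.inner_apply, conj_trivial] at h2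
    rw [← h2]; exact Finset.sum_congr rfl fun _ _ => mul_comm _ _
  -- value of eigenvalues as sum of squares
  have heigval : ∀ i, hM.eigenvalues i
      = ∑ x, ((B *ᵥ fun y => hM.eigenvectorBasis i y) x) ^ 2 := by
    intro i
    have h1 : (fun y => hM.eigenvectorBasis i y) ⬝ᵥ (M *ᵥ fun y => hM.eigenvectorBasis i y)
        = hM.eigenvalues i := by
      have hmv : (M *ᵥ fun y => hM.eigenvectorBasis i y)
          = fun y => hM.eigenvalues i * hM.eigenvectorBasis i y :=
        hM.mulVec_eigenvectorBasis i
      rw [hmv]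
      simp only [dotProduct, mul_left_comm _ (hM.eigenvalues i), ← Finset.mul_sum]
      rw [horth i i, if_pos rfl, mul_one]
    rw [← h1, key2]
    simp [dotProduct, sq]
  have heignn : ∀ i, 0 ≤ hM.eigenvalues i := by
    intro i
    rw [heigval i]
    exact Finset.sum_nonneg fun x _ => sq_nonneg _
  -- all eigenvalues ≤ 1
  have heigle : ∀ i, hM.eigenvalues i ≤ 1 := by
    intro i
    have hv2 : ∑ y, (hM.eigenvectorBasis i y) ^ 2 = 1 := by
      have h := horth i i
      rw [if_pos rfl] at h
      simpa [sq] using h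
    rw [heigval i]
    have hbound : ∀ x, ((B *ᵥ fun y => hM.eigenvectorBasis i y) x) ^ 2
        ≤ ∑ y, p (x, y) * (hM.eigenvectorBasis i y) ^ 2 / r y := by
      intro x
      have hcs := Finset.sum_mul_sq_le_sq_mul_sq Finset.univ
        (fun y => Real.sqrt (p (x, y)))
        (fun y => Real.sqrt (p (x, y)) * hM.eigenvectorBasis i y
            / (Real.sqrt (q x) * Real.sqrt (r y)))
      have e1 : ∀ y, Real.sqrt (p (x, y)) * (Real.sqrt (p (x, y)) * hM.eigenvectorBasis i y
          / (Real.sqrt (q x) * Real.sqrt (r y))) = B x y * hM.eigenvectorBasis i y := by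
        intro y
        have ha : Real.sqrt (p (x, y)) * Real.sqrt (p (x, y)) = p (x, y) :=
          Real.mul_self_sqrt (hp0 _)
        rw [hBapp]
        conv_rhs => rw [← ha]
        ring
      have e2 : ∑ y, (Real.sqrt (p (x, y))) ^ 2 = q x := by
        rw [← hqsum x]
        exact Finset.sum_congr rfl fun y _ => Real.sq_sqrt (hp0 _)
      have e3 : ∀ y, (Real.sqrt (p (x, y)) * hM.eigenvectorBasis i y
          / (Real.sqrt (q x) * Real.sqrt (r y))) ^ 2
          = p (x, y) * (hM.eigenvectorBasis i y) ^ 2 / (q x * r y) := by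
        intro y
        rw [div_pow, mul_pow, Real.sq_sqrt (hp0 _), mul_pow,
          Real.sq_sqrt (hq x).le, Real.sq_sqrt (hr y).le]
      calc ((B *ᵥ fun y => hM.eigenvectorBasis i y) x) ^ 2
          = (∑ y, Real.sqrt (p (x, y)) * (Real.sqrt (p (x, y)) * hM.eigenvectorBasis i y
              / (Real.sqrt (q x) * Real.sqrt (r y)))) ^ 2 := by
            rw [hmulVecApp]
            congr 1
            exact (Finset.sum_congr rfl fun y _ => e1 y).symm
        _ ≤ (∑ y, (Real.sqrt (p (x, y))) ^ 2) *
            ∑ y, (Real.sqrt (p (x, y)) * hM.eigenvectorBasis i y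
              / (Real.sqrt (q x) * Real.sqrt (r y))) ^ 2 := hcs
        _ = q x * ∑ y, p (x, y) * (hM.eigenvectorBasis i y) ^ 2 / (q x * r y) := by
            rw [e2]
            congr 1
            exact Finset.sum_congr rfl fun y _ => e3 y
        _ = ∑ y, p (x, y) * (hM.eigenvectorBasis i y) ^ 2 / r y := by
            rw [Finset.mul_sum]
            refine Finset.sum_congr rfl fun y _ => ?_
            rw [mul_comm (q x) (r y), ← div_div, ← mul_div_assoc,
              mul_div_cancel_left₀ _ (hq x).ne']
    calc ∑ x, ((B *ᵥ fun y => hM.eigenvectorBasis i y) x) ^ 2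
        ≤ ∑ x, ∑ y, p (x, y) * (hM.eigenvectorBasis i y) ^ 2 / r y :=
          Finset.sum_le_sum fun x _ => hbound x
      _ = ∑ y, ∑ x, p (x, y) * (hM.eigenvectorBasis i y) ^ 2 / r y := Finset.sum_comm
      _ = ∑ y, (hM.eigenvectorBasis i y) ^ 2 := by
          refine Finset.sum_congr rfl fun y _ => ?_
          rw [← Finset.sum_div, ← Finset.sum_mul, hrsum y,
            mul_div_cancel_left₀ _ (hr y).ne']
      _ = 1 := hv2
  -- the vector √r is a fixed point of M
  have hMw : (M *ᵥ fun y => Real.sqrt (r y)) = fun y => Real.sqrt (r y) := by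
    have hF1 : ∀ x, ∑ y', B x y' * Real.sqrt (r y') = Real.sqrt (q x) := by
      intro x
      have h1 : ∀ y', B x y' * Real.sqrt (r y') = p (x, y') / Real.sqrt (q x) := by
        intro y'
        rw [hBapp, div_mul_eq_mul_div, mul_comm (Real.sqrt (q x)), ← div_div,
          mul_div_assoc, div_self (hsr y').ne', mul_one]
      rw [Finset.sum_congr rfl fun y' _ => h1 y', ← Finset.sum_div, hqsum x, Real.div_sqrt]
    funext y
    have h2 : (M *ᵥ fun y => Real.sqrt (r y)) y
        = ∑ x, B x y * (∑ y', B x y' * Real.sqrt (r y')) := by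
      simp only [Matrix.mulVec, dotProduct, hMapp, Finset.sum_mul, Finset.mul_sum]
      rw [Finset.sum_comm]
      exact Finset.sum_congr rfl fun x _ => Finset.sum_congr rfl fun y' _ => by ring
    rw [h2]
    have h3 : ∀ x, B x y * Real.sqrt (q x) = p (x, y) / Real.sqrt (r y) := by
      intro x
      rw [hBapp, div_mul_eq_mul_div, mul_comm (p (x, y)) (Real.sqrt (q x)),
        mul_div_mul_left _ _ (hsq x).ne']
    calc ∑ x, B x y * (∑ y', B x y' * Real.sqrt (r y'))
        = ∑ x, p (x, y) / Real.sqrt (r y) := by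
          refine Finset.sum_congr rfl fun x _ => ?_
          rw [hF1 x, h3 x]
      _ = Real.sqrt (r y) := by rw [← Finset.sum_div, hrsum y, Real.div_sqrt]
  -- some eigenvalue equals 1
  have hex1 : ∃ i, hM.eigenvalues i = 1 := by
    by_contra hno
    push_neg at hno
    have hcoef : ∀ i : Y, ∑ y, hM.eigenvectorBasis i y * Real.sqrt (r y) = 0 := by
      intro i
      have h1 : (fun y => hM.eigenvectorBasis i y) ⬝ᵥ (M *ᵥ fun y => Real.sqrt (r y))
          = ∑ y, hM.eigenvectorBasis i y * Real.sqrt (r y) := by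
        rw [hMw]
        simp [dotProduct]
      have h3 : (fun y => hM.eigenvectorBasis i y) ᵥ* M
          = hM.eigenvalues i • fun y => hM.eigenvectorBasis i y := by
        rw [hvmM]
        exact hM.mulVec_eigenvectorBasis i
      have h2 : (fun y => hM.eigenvectorBasis i y) ⬝ᵥ (M *ᵥ fun y => Real.sqrt (r y))
          = hM.eigenvalues i * ∑ y, hM.eigenvectorBasis i y * Real.sqrt (r y) := by
        rw [Matrix.dotProduct_mulVec, h3, smul_dotProduct]
        simp [dotProduct, Finset.mul_sum]
      have h4 := h1.symm.trans h2
      have h5 : (hM.eigenvalues i - 1) * ∑ y, hM.eigenvectorBasis i y * Real.sqrt (r y) = 0 := by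
        rw [sub_mul, one_mul, ← h4, sub_self]
      rcases mul_eq_zero.1 h5 with h | h
      · exact absurd (sub_eq_zero.1 h) (hno i)
      · exact h
    have hy0 : ∀ y, Real.sqrt (r y) = 0 := by
      intro y
      have h := euclid_expand hM.eigenvectorBasis (fun y => Real.sqrt (r y)) y
      rw [Finset.sum_congr rfl (fun i _ => by rw [hcoef i, zero_mul])] at h
      simpa using h
    exact absurd (hy0 (Classical.arbitrary Y)) (hsr _).ne'
  -- sorted indexing
  set eY : Fin (Fintype.card Y) ≃ Y := (Fintype.equivFin Y).symm with heYdef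
  set lam : Fin (Fintype.card Y) → ℝ := fun k => hM.eigenvalues (eY k) with hlamdef
  set π : Equiv.Perm (Fin (Fintype.card Y)) := Tuple.sort (fun k => -lam k) with hπdef
  set idx : Fin (Fintype.card Y) ≃ Y := π.trans eY with hidxdef
  set σ' : Fin (Fintype.card Y) → ℝ := fun k => hM.eigenvalues (idx k) with hσdef
  have hanti : Antitone σ' := by
    intro a b hab
    have h := Tuple.monotone_sort (fun k => -lam k) hab
    simpa [hσdef, hidxdef, hlamdef] using h
  have hσnn : ∀ k, 0 ≤ σ' k := fun k => heignn _
  have hσle : ∀ k, σ' k ≤ 1 := fun k => heigle _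
  have hσ0 : σ' ⟨0, Fintype.card_pos⟩ = 1 := by
    obtain ⟨i, hi⟩ := hex1
    have h1 : σ' (idx.symm i) = 1 := by simpa [hσdef] using hi
    have h2 : (1:ℝ) ≤ σ' ⟨0, Fintype.card_pos⟩ := by
      rw [← h1]
      exact hanti (Fin.mk_le_of_le_val (Nat.zero_le _))
    exact le_antisymm (hσle _) h2
  -- eigenvectors, reindexed
  set u : Fin (Fintype.card Y) → (Y → ℝ) := fun k y => hM.eigenvectorBasis (idx k) y with hudef
  have horth' : ∀ k k', ∑ y, u k y * u k' y = if k = k' then (1:ℝ) else 0 := by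
    intro k k'
    rw [hudef]
    rw [horth (idx k) (idx k')]
    simp [idx.injective.eq_iff]
  have hBuBu : ∀ k k', (B *ᵥ u k) ⬝ᵥ (B *ᵥ u k') = if k = k' then σ' k else 0 := by
    intro k k'
    rw [← key2]
    have hm : M *ᵥ u k' = fun y => σ' k' * u k' y := hM.mulVec_eigenvectorBasis (idx k')
    rw [hm]
    simp only [dotProduct, mul_left_comm _ (σ' k'), ← Finset.mul_sum]
    rw [horth' k k']
    by_cases h : k = k' <;> simp [h]
  have hBu0 : ∀ k, σ' k = 0 → B *ᵥ u k = 0 := by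
    intro k hk
    funext x
    have h := hBuBu k k
    rw [if_pos rfl, hk] at h
    have h2 : ∑ x, (B *ᵥ u k) x ^ 2 = 0 := by
      rw [← h]; simp [dotProduct, sq]
    have h3 := (Finset.sum_eq_zero_iff_of_nonneg
      (fun x _ => sq_nonneg ((B *ᵥ u k) x))).1 h2 x (Finset.mem_univ x)
    simpa using pow_eq_zero_iff (n := 2) (by norm_num) |>.1 h3
  -- orthonormal extension in EuclideanSpace ℝ X
  obtain ⟨Φ, hΦorth, hΦeq⟩ :
      ∃ Φ : Fin (Fintype.card Y) → (X → ℝ),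
        (∀ k k', ∑ x, Φ k x * Φ k' x = if k = k' then (1:ℝ) else 0) ∧
        (∀ k, σ' k ≠ 0 → Φ k = fun x => (Real.sqrt (σ' k))⁻¹ * (B *ᵥ u k) x) := by
    set c : Fin (Fintype.card Y) → EuclideanSpace ℝ X :=
      fun k => (WithLp.equiv 2 (X → ℝ)).symm
        (fun x => (Real.sqrt (σ' k))⁻¹ * (B *ᵥ u k) x) with hcdef
    have hcapp : ∀ k x, c k x = (Real.sqrt (σ' k))⁻¹ * (B *ᵥ u k) x := fun k x => rfl
    have hcinner : ∀ k k', σ' k ≠ 0 → σ' k' ≠ 0 →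
        ∑ x, c k x * c k' x = if k = k' then (1:ℝ) else 0 := by
      intro k k' hk hk'
      have hpos : 0 < σ' k := lt_of_le_of_ne (hσnn k) (Ne.symm hk)
      have h1 : ∑ x, c k x * c k' x
          = (Real.sqrt (σ' k))⁻¹ * (Real.sqrt (σ' k'))⁻¹ * ((B *ᵥ u k) ⬝ᵥ (B *ᵥ u k')) := by
        simp only [hcapp, dotProduct, Finset.mul_sum]
        exact Finset.sum_congr rfl fun x _ => by ring
      rw [h1, hBuBu]
      by_cases h : k = k'
      · subst h
        rw [if_pos rfl, if_pos rfl, ← mul_inv, Real.mul_self_sqrt hpos.le,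
          inv_mul_cancel₀ hk]
      · rw [if_neg h, if_neg h, mul_zero]
    set s : Set (Fin (Fintype.card X)) :=
      {i | ∃ h : (i : ℕ) < Fintype.card Y, σ' ⟨i, h⟩ ≠ 0} with hsdef
    set v : Fin (Fintype.card X) → EuclideanSpace ℝ X :=
      fun i => if h : (i : ℕ) < Fintype.card Y then c ⟨i, h⟩ else 0 with hvdef
    have hon : Orthonormal ℝ (s.restrict v) := by
      rw [orthonormal_iff_ite]
      rintro ⟨i, hi1, hi2⟩ ⟨j, hj1, hj2⟩
      have hvi : v i = c ⟨i, hi1⟩ := by simp only [hvdef]; rw [dif_pos hi1]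
      have hvj : v j = c ⟨j, hj1⟩ := by simp only [hvdef]; rw [dif_pos hj1]
      have hIP : (inner ℝ (v i) (v j) : ℝ) = ∑ x, c ⟨i, hi1⟩ x * c ⟨j, hj1⟩ x := by
        rw [hvi, hvj]
        simp [PiLp.inner_apply, RCLike.inner_apply, conj_trivial, mul_comm ((c ⟨j, hj1⟩).ofLp _)]
      show (inner ℝ (v i) (v j) : ℝ) = _
      rw [hIP, hcinner _ _ hi2 hj2]
      by_cases hij : i = j
      · subst hij
        rw [if_pos rfl, if_pos rfl]
      · rw [if_neg (fun hcon => hij (Fin.ext (Fin.mk.inj_iff.1 hcon))),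
            if_neg (fun hcon => hij (congrArg Subtype.val hcon))]
    have hcard : Module.finrank ℝ (EuclideanSpace ℝ X)
        = Fintype.card (Fin (Fintype.card X)) := by
      simp [finrank_euclideanSpace]
    obtain ⟨b, hb⟩ := hon.exists_orthonormalBasis_extension_of_card_eq hcard
    refine ⟨fun k x => b (Fin.castLE hc k) x, ?_, ?_⟩
    · intro k k'
      have h := orthonormal_iff_ite.1 b.orthonormal (Fin.castLE hc k) (Fin.castLE hc k')
      have h2 : (inner ℝ (b (Fin.castLE hc k)) (b (Fin.castLE hc k')) : ℝ)
          = ∑ x, b (Fin.castLE hc k) x * b (Fin.castLE hc k') x := by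
        simp [PiLp.inner_apply, RCLike.inner_apply, conj_trivial, mul_comm ((b (Fin.castLE hc k')).ofLp _)]
      rw [h2] at h
      rw [h]
      by_cases hkk : k = k'
      · subst hkk
        rw [if_pos rfl, if_pos rfl]
      · rw [if_neg (fun hcon => hkk ((Fin.castLE_inj).1 hcon)), if_neg hkk]
    · intro k hk
      have hmem : (Fin.castLE hc k) ∈ s := ⟨k.isLt, hk⟩
      have hbv := hb _ hmem
      have hbc : b (Fin.castLE hc k) = c k := by
        rw [hbv]
        simp only [hvdef]
        rw [dif_pos (show ((Fin.castLE hc k : Fin (Fintype.card X)) : ℕ) < Fintype.card Y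
          from k.isLt)]
        exact congrArg c (Fin.ext rfl)
      funext x
      show b (Fin.castLE hc k) x = (Real.sqrt (σ' k))⁻¹ * (B *ᵥ u k) x
      rw [hbc]
      exact hcapp k x
  have hBuΦ : ∀ k, B *ᵥ u k = fun x => Real.sqrt (σ' k) * Φ k x := by
    intro k
    by_cases hk : σ' k = 0
    · rw [hBu0 k hk]
      funext x
      simp [hk]
    · rw [hΦeq k hk]
      funext x
      have hs : Real.sqrt (σ' k) ≠ 0 :=
        Real.sqrt_ne_zero'.2 (lt_of_le_of_ne (hσnn k) (Ne.symm hk))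
      field_simp
  -- completeness: expansion of rows of B
  have hexpand : ∀ x y, B x y = ∑ k, Real.sqrt (σ' k) * Φ k x * u k y := by
    intro x y
    have h := euclid_expand hM.eigenvectorBasis (fun y' => B x y') y
    rw [h, ← Equiv.sum_comp idx
      (fun i => (∑ y', hM.eigenvectorBasis i y' * B x y') * hM.eigenvectorBasis i y)]
    refine Finset.sum_congr rfl fun k _ => ?_
    have e1 : ∑ y', hM.eigenvectorBasis (idx k) y' * B x y' = (B *ᵥ u k) x := by
      rw [hmulVecApp]
      exact Finset.sum_congr rfl fun y' _ => mul_comm _ _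
    rw [e1, hBuΦ k]
  -- final assembly
  refine ⟨σ', fun k x => Φ k x / Real.sqrt (q x), fun k y => u k y / Real.sqrt (r y),
    hσ0, hanti, hσnn, ?_, ?_, ?_⟩
  · intro x y
    have hqx : Real.sqrt (q x) * Real.sqrt (q x) = q x := Real.mul_self_sqrt (hq x).le
    have hry : Real.sqrt (r y) * Real.sqrt (r y) = r y := Real.mul_self_sqrt (hr y).le
    have h1 : p (x, y) / (q x * r y) = B x y / (Real.sqrt (q x) * Real.sqrt (r y)) := by
      rw [hBapp, div_div]
      congr 1
      rw [mul_mul_mul_comm, hqx, hry]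
    rw [h1, hexpand x y, Finset.sum_div]
    refine Finset.sum_congr rfl fun k _ => ?_
    show Real.sqrt (σ' k) * Φ k x * u k y / (Real.sqrt (q x) * Real.sqrt (r y))
      = Real.sqrt (σ' k) * (Φ k x / Real.sqrt (q x)) * (u k y / Real.sqrt (r y))
    ring
  · intro k k'
    rw [← hΦorth k k']
    refine Finset.sum_congr rfl fun x _ => ?_
    show q x * (Φ k x / Real.sqrt (q x) * (Φ k' x / Real.sqrt (q x))) = Φ k x * Φ k' x
    rw [div_mul_div_comm, Real.mul_self_sqrt (hq x).le, ← mul_div_assoc,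
      mul_div_cancel_left₀ _ (hq x).ne']
  · intro k k'
    rw [← horth' k k']
    refine Finset.sum_congr rfl fun y _ => ?_
    show r y * (u k y / Real.sqrt (r y) * (u k' y / Real.sqrt (r y))) = u k y * u k' y
    rw [div_mul_div_comm, Real.mul_self_sqrt (hr y).le, ← mul_div_assoc,
      mul_div_cancel_left₀ _ (hr y).ne']


/-- orthonormal decomposition of the density ratio, Eq. (1) of the
paper, for finite types. For a joint pmf `p` on finite `X × Y` with
everywhere-positive marginals, there exist `N = min(|X|, |Y|)` numbers
`1 = σ₁ ≥ σ₂ ≥ … ≥ σ_N ≥ 0` and functions `φ_k : X → ℝ`, `ψ_k : Y → ℝ` such that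
`p(x,y)/(p_X(x) p_Y(y)) = ∑ₖ √(σₖ) φₖ(x) ψₖ(y)`, with the `φ_k` orthonormal in
`L²(p_X)` and the `ψ_k` orthonormal in `L²(p_Y)`. -/
theorem density_ratio_orthonormal_decomposition {X Y : Type*} [Fintype X] [Fintype Y]
    [Nonempty X] [Nonempty Y]
    (p : X × Y → ℝ) (hp0 : ∀ z, 0 ≤ p z) (hp1 : ∑ z : X × Y, p z = 1)
    (hX : ∀ x, 0 < margX p x) (hY : ∀ y, 0 < margY p y) :
    ∃ σ : Fin (min (Fintype.card X) (Fintype.card Y)) → ℝ,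
    ∃ φ : Fin (min (Fintype.card X) (Fintype.card Y)) → X → ℝ,
    ∃ ψ : Fin (min (Fintype.card X) (Fintype.card Y)) → Y → ℝ,
      σ ⟨0, lt_min Fintype.card_pos Fintype.card_pos⟩ = 1 ∧
      Antitone σ ∧ (∀ k, 0 ≤ σ k) ∧
      (∀ x y, p (x, y) / (margX p x * margY p y) =
        ∑ k, Real.sqrt (σ k) * φ k x * ψ k y) ∧
      (∀ k k', ∑ x, margX p x * (φ k x * φ k' x) = if k = k' then (1 : ℝ) else 0) ∧
      (∀ k k', ∑ y, margY p y * (ψ k y * ψ k' y) = if k = k' then (1 : ℝ) else 0) := by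
  rcases le_or_gt (Fintype.card Y) (Fintype.card X) with hc | hc
  · obtain ⟨σ, φ, ψ, h0, hmono, hnn, hdec, hφ, hψ⟩ := aux_svd p hp0 hX hY hc
    have hN : min (Fintype.card X) (Fintype.card Y) = Fintype.card Y := min_eq_right hc
    refine ⟨fun k => σ (Fin.cast hN k), fun k => φ (Fin.cast hN k), fun k => ψ (Fin.cast hN k),
      h0, ?_, fun k => hnn _, ?_, ?_, ?_⟩
    · intro a b hab
      exact hmono hab
    · intro x y
      rw [hdec x y]
      exact (Fintype.sum_equiv (finCongr hN) _ _ (fun k => rfl)).symm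
    · intro k k'
      rw [hφ (Fin.cast hN k) (Fin.cast hN k')]
      by_cases h : k = k'
      · subst h; simp
      · rw [if_neg (fun hcon => h (Fin.ext (by simpa using congrArg Fin.val hcon))), if_neg h]
    · intro k k'
      rw [hψ (Fin.cast hN k) (Fin.cast hN k')]
      by_cases h : k = k'
      · subst h; simp
      · rw [if_neg (fun hcon => h (Fin.ext (by simpa using congrArg Fin.val hcon))), if_neg h]
  · set p' : Y × X → ℝ := fun z => p (z.2, z.1) with hp'def
    have hp0' : ∀ z, 0 ≤ p' z := fun z => hp0 _
    have hX' : ∀ y, 0 < margX p' y := hY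
    have hY' : ∀ x, 0 < margY p' x := hX
    obtain ⟨σ, φ, ψ, h0, hmono, hnn, hdec, hφ, hψ⟩ := aux_svd p' hp0' hX' hY' hc.le
    have hN : min (Fintype.card X) (Fintype.card Y) = Fintype.card X := min_eq_left hc.le
    refine ⟨fun k => σ (Fin.cast hN k), fun k => ψ (Fin.cast hN k), fun k => φ (Fin.cast hN k),
      h0, ?_, fun k => hnn _, ?_, ?_, ?_⟩
    · intro a b hab
      exact hmono hab
    · intro x y
      have h := hdec y x
      rw [mul_comm (margX p' y) (margY p' x)] at h
      show p' (y, x) / (margY p' x * margX p' y) = _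
      rw [h]
      exact (Fintype.sum_equiv (finCongr hN) _ _ (fun k => by rw [finCongr_apply]; ring)).symm
    · intro k k'
      have h := hψ (Fin.cast hN k) (Fin.cast hN k')
      rw [show (∑ x, margY p' x * (ψ (Fin.cast hN k) x * ψ (Fin.cast hN k') x))
        = ∑ x, margX p x * (ψ (Fin.cast hN k) x * ψ (Fin.cast hN k') x) from rfl] at h
      rw [h]
      by_cases hkk : k = k'
      · subst hkk; simp
      · rw [if_neg (fun hcon => hkk (Fin.ext (by simpa using congrArg Fin.val hcon))),
          if_neg hkk]
    · intro k k'
      have h := hφ (Fin.cast hN k) (Fin.cast hN k')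
      rw [show (∑ y, margX p' y * (φ (Fin.cast hN k) y * φ (Fin.cast hN k') y))
        = ∑ y, margY p y * (φ (Fin.cast hN k) y * φ (Fin.cast hN k') y) from rfl] at h
      rw [h]
      by_cases hkk : k = k'
      · subst hkk; simp
      · rw [if_neg (fun hcon => hkk (Fin.ext (by simpa using congrArg Fin.val hcon))),
          if_neg hkk]
end

section
/- Let X and Y be finite types, p a joint pmf on X × Y with everywhere-positive marginals p_X and p_Y, and Q(x, y) = p(x, y) / √(p_X(x) p_Y(y)) the normalized joint matrix. Let f : X → ℝ^K and g : Y → ℝ^K be whitened feature maps, meaning ∑_x p_X(x) f(x) f(x)ᵀ = I_K and ∑_y p_Y(y) g(y) g(y)ᵀ = I_K, and define the cross-correlation matrix P = ∑_{x,y} p(x, y) f(x) g(y)ᵀ ∈ ℝ^{K × K}. Then for every i with 1 ≤ i ≤ K, the i-th singular value of P is at most the i-th singular value of Q; in particular all singular values of P lie in [0, 1] and I_K − PᵀP is positive semidefinite. -/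
open Finset Matrix

namespace WhitenedAux

variable {n m : Type*} [Fintype n] [Fintype m]

lemma dot_self_nonneg (v : n → ℝ) : 0 ≤ v ⬝ᵥ v :=
  Finset.sum_nonneg fun i _ => mul_self_nonneg _

lemma sumsq_eq_dot (v : n → ℝ) : ∑ i, v i ^ 2 = v ⬝ᵥ v := by
  simp [dotProduct, sq]

lemma euclNorm_nonneg' (v : n → ℝ) : 0 ≤ euclNorm v := Real.sqrt_nonneg _

lemma euclNorm_le (v : n → ℝ) (w : m → ℝ) (h : v ⬝ᵥ v ≤ w ⬝ᵥ w) :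
    euclNorm v ≤ euclNorm w := by
  apply Real.sqrt_le_sqrt
  rw [sumsq_eq_dot, sumsq_eq_dot]
  exact h

lemma euclNorm_pos {v : n → ℝ} (hv : v ≠ 0) : 0 < euclNorm v := by
  obtain ⟨i, hi⟩ := Function.ne_iff.1 hv
  refine Real.sqrt_pos.2 (Finset.sum_pos' (fun j _ => sq_nonneg _)
    ⟨i, Finset.mem_univ _, lt_of_le_of_ne (sq_nonneg _) (Ne.symm (pow_ne_zero 2 hi))⟩)

lemma eq_zero_of_dot_self {v : n → ℝ} (h : v ⬝ᵥ v = 0) : v = 0 := by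
  funext i
  have := (Finset.sum_eq_zero_iff_of_nonneg (fun j _ => mul_self_nonneg (v j))).1 h i
    (Finset.mem_univ i)
  exact mul_self_eq_zero.1 this

lemma mulVec_isometry [DecidableEq n] {B : Matrix m n ℝ} (hB : Bᵀ * B = 1) (v : n → ℝ) :
    (B *ᵥ v) ⬝ᵥ (B *ᵥ v) = v ⬝ᵥ v := by
  rw [dotProduct_mulVec, ← mulVec_transpose, mulVec_mulVec, hB, one_mulVec]

lemma transpose_contraction [DecidableEq n] {A : Matrix m n ℝ} (hA : Aᵀ * A = 1) (w : m → ℝ) :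
    (Aᵀ *ᵥ w) ⬝ᵥ (Aᵀ *ᵥ w) ≤ w ⬝ᵥ w := by
  have h1 : (A *ᵥ (Aᵀ *ᵥ w)) ⬝ᵥ (A *ᵥ (Aᵀ *ᵥ w)) = (Aᵀ *ᵥ w) ⬝ᵥ (Aᵀ *ᵥ w) :=
    mulVec_isometry hA _
  have h2 : w ⬝ᵥ (A *ᵥ (Aᵀ *ᵥ w)) = (Aᵀ *ᵥ w) ⬝ᵥ (Aᵀ *ᵥ w) := by
    rw [dotProduct_mulVec, ← mulVec_transpose]
  have h3 : (A *ᵥ (Aᵀ *ᵥ w)) ⬝ᵥ w = (Aᵀ *ᵥ w) ⬝ᵥ (Aᵀ *ᵥ w) := by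
    rw [dotProduct_comm]; exact h2
  have h0 : 0 ≤ (w - A *ᵥ (Aᵀ *ᵥ w)) ⬝ᵥ (w - A *ᵥ (Aᵀ *ᵥ w)) := dot_self_nonneg _
  rw [sub_dotProduct, dotProduct_sub, dotProduct_sub] at h0
  linarith

lemma exists_subspace {K i : ℕ} (h : i < K) :
    ∃ V : Submodule ℝ (Fin K → ℝ), Module.finrank ℝ ↥V = i + 1 := by
  have hli : LinearIndependent ℝ (fun j : Fin (i+1) => (Pi.single (Fin.castLE h j) 1 : Fin K → ℝ)) := by
    have h2 := (Pi.basisFun ℝ (Fin K)).linearIndependent.comp (Fin.castLE h)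
      (Fin.castLE_injective h)
    simpa [Function.comp_def, Pi.basisFun_apply] using h2
  refine ⟨Submodule.span ℝ (Set.range fun j : Fin (i+1) => (Pi.single (Fin.castLE h j) 1 : Fin K → ℝ)), ?_⟩
  rw [finrank_span_eq_card hli]
  simp

lemma mem_le_one {M : Matrix m n ℝ} (hM : ∀ v, (M *ᵥ v) ⬝ᵥ (M *ᵥ v) ≤ v ⬝ᵥ v)
    {i : ℕ} {t : ℝ}
    (ht : t ∈ {t : ℝ | ∃ V : Submodule ℝ (n → ℝ), Module.finrank ℝ ↥V = i + 1 ∧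
      ∀ v ∈ V, t * euclNorm v ≤ euclNorm (M.mulVec v)}) : t ≤ 1 := by
  obtain ⟨V, hV, hle⟩ := ht
  have hne : V ≠ ⊥ := by
    intro h
    rw [h] at hV
    simp [finrank_bot] at hV
  obtain ⟨v, hvV, hv0⟩ := Submodule.exists_mem_ne_zero_of_ne_bot hne
  have h1 := (hle v hvV).trans (euclNorm_le _ _ (hM v))
  have h2 := euclNorm_pos hv0
  nlinarith

lemma finrank_map_eq [DecidableEq n] {B : Matrix m n ℝ} (hB : Bᵀ * B = 1) (V : Submodule ℝ (n → ℝ)) :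
    Module.finrank ℝ ↥(V.map B.mulVecLin) = Module.finrank ℝ ↥V := by
  have hinj : Function.Injective B.mulVecLin := by
    rw [← LinearMap.ker_eq_bot, LinearMap.ker_eq_bot']
    intro v hv
    have : (B *ᵥ v) ⬝ᵥ (B *ᵥ v) = v ⬝ᵥ v := mulVec_isometry hB v
    rw [show B *ᵥ v = B.mulVecLin v from rfl, hv] at this
    simp at this
    exact eq_zero_of_dot_self this.symm
  exact (Submodule.equivMapOfInjective B.mulVecLin hinj V).finrank_eq.symm

end WhitenedAux

/-- For whitened feature maps `f : X → ℝ^K` and `g : Y → ℝ^K`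
(`E_{p_X}[f fᵀ] = I_K`, `E_{p_Y}[g gᵀ] = I_K`), every singular value of the
cross-correlation matrix `P = E_{p}[f gᵀ]` is dominated by the corresponding singular
value of the normalized joint matrix `Q`; in particular all singular values of `P`
lie in `[0, 1]` and `I_K − PᵀP` is positive semidefinite. -/
theorem whitened_cross_correlation_singular_values {X Y : Type*}
    [Fintype X] [Fintype Y] {K : ℕ}
    (p : X × Y → ℝ) (hp0 : ∀ z, 0 ≤ p z) (hp1 : ∑ z : X × Y, p z = 1)
    (hX : ∀ x, 0 < margX p x) (hY : ∀ y, 0 < margY p y)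
    (Q : Matrix X Y ℝ)
    (hQ : ∀ x y, Q x y = p (x, y) / Real.sqrt (margX p x * margY p y))
    (f : X → Fin K → ℝ) (g : Y → Fin K → ℝ)
    (hf : ∑ x, margX p x • vecMulVec (f x) (f x) = (1 : Matrix (Fin K) (Fin K) ℝ))
    (hg : ∑ y, margY p y • vecMulVec (g y) (g y) = (1 : Matrix (Fin K) (Fin K) ℝ))
    (P : Matrix (Fin K) (Fin K) ℝ)
    (hP : P = ∑ x, ∑ y, p (x, y) • vecMulVec (f x) (g y)) :
    (∀ i < K, nthSingularValue P i ≤ nthSingularValue Q i) ∧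
    (∀ i < K, nthSingularValue P i ∈ Set.Icc (0 : ℝ) 1) ∧
    ((1 : Matrix (Fin K) (Fin K) ℝ) - Pᵀ * P).PosSemidef := by
  classical
  set A : Matrix X (Fin K) ℝ := Matrix.of fun x k => Real.sqrt (margX p x) * f x k with hAdef
  set B : Matrix Y (Fin K) ℝ := Matrix.of fun y k => Real.sqrt (margY p y) * g y k with hBdef
  have hA : Aᵀ * A = 1 := by
    ext j k
    have hfe := Matrix.ext_iff.2 hf j k
    simp only [Matrix.sum_apply, Matrix.smul_apply, vecMulVec_apply, smul_eq_mul] at hfe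
    rw [← hfe]
    simp only [Matrix.mul_apply, transpose_apply, hAdef, Matrix.of_apply]
    refine Finset.sum_congr rfl fun x _ => ?_
    have h0 : Real.sqrt (margX p x) * Real.sqrt (margX p x) = margX p x :=
      Real.mul_self_sqrt (hX x).le
    calc Real.sqrt (margX p x) * f x j * (Real.sqrt (margX p x) * f x k)
        = Real.sqrt (margX p x) * Real.sqrt (margX p x) * (f x j * f x k) := by ring
      _ = margX p x * (f x j * f x k) := by rw [h0]
  have hB : Bᵀ * B = 1 := by
    ext j k
    have hge := Matrix.ext_iff.2 hg j k
    simp only [Matrix.sum_apply, Matrix.smul_apply, vecMulVec_apply, smul_eq_mul] at hge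
    rw [← hge]
    simp only [Matrix.mul_apply, transpose_apply, hBdef, Matrix.of_apply]
    refine Finset.sum_congr rfl fun y _ => ?_
    have h0 : Real.sqrt (margY p y) * Real.sqrt (margY p y) = margY p y :=
      Real.mul_self_sqrt (hY y).le
    calc Real.sqrt (margY p y) * g y j * (Real.sqrt (margY p y) * g y k)
        = Real.sqrt (margY p y) * Real.sqrt (margY p y) * (g y j * g y k) := by ring
      _ = margY p y * (g y j * g y k) := by rw [h0]
  have hPQ : P = Aᵀ * Q * B := by
    ext j k
    have hPe := Matrix.ext_iff.2 hP j k
    simp only [Matrix.sum_apply, Matrix.smul_apply, vecMulVec_apply, smul_eq_mul] at hPe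
    rw [hPe, Matrix.mul_assoc]
    simp only [Matrix.mul_apply, transpose_apply, hAdef, hBdef, Matrix.of_apply]
    refine Finset.sum_congr rfl fun x _ => ?_
    rw [Finset.mul_sum]
    refine Finset.sum_congr rfl fun y _ => ?_
    rw [hQ, Real.sqrt_mul (hX x).le]
    have hxs : (0:ℝ) < Real.sqrt (margX p x) := Real.sqrt_pos.2 (hX x)
    have hys : (0:ℝ) < Real.sqrt (margY p y) := Real.sqrt_pos.2 (hY y)
    field_simp
  have keyQ : ∀ w : Y → ℝ, (Q *ᵥ w) ⬝ᵥ (Q *ᵥ w) ≤ w ⬝ᵥ w := by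
    intro w
    have hrow : ∀ x, (Q *ᵥ w) x * (Q *ᵥ w) x ≤ ∑ y, p (x,y) / margY p y * w y ^ 2 := by
      intro x
      have hcs := Finset.sum_mul_sq_le_sq_mul_sq Finset.univ
        (fun y => Real.sqrt (p (x,y) / margX p x))
        (fun y => Real.sqrt (p (x,y) / margY p y) * w y)
      have he1 : ∀ y : Y, Real.sqrt (p (x,y) / margX p x) *
          (Real.sqrt (p (x,y) / margY p y) * w y) = Q x y * w y := by
        intro y
        rw [hQ, ← mul_assoc, ← Real.sqrt_mul (div_nonneg (hp0 _) (hX x).le),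
          show p (x,y) / margX p x * (p (x,y) / margY p y)
            = p (x,y) ^ 2 / (margX p x * margY p y) by ring,
          Real.sqrt_div (sq_nonneg _), Real.sqrt_sq (hp0 _)]
      have he2 : ∀ y : Y, (Real.sqrt (p (x,y) / margX p x))^2 = p (x,y) / margX p x :=
        fun y => Real.sq_sqrt (div_nonneg (hp0 _) (hX x).le)
      have he3 : ∀ y : Y, (Real.sqrt (p (x,y) / margY p y) * w y)^2
          = p (x,y) / margY p y * w y^2 := by
        intro y
        rw [mul_pow, Real.sq_sqrt (div_nonneg (hp0 _) (hY y).le)]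
      have hsum1 : ∑ y, p (x,y) / margX p x = 1 := by
        rw [← Finset.sum_div]
        exact div_self (hX x).ne'
      have hQw : (Q *ᵥ w) x = ∑ y, Q x y * w y := by simp [Matrix.mulVec, dotProduct]
      rw [hQw, ← sq]
      calc (∑ y, Q x y * w y)^2
          = (∑ y, Real.sqrt (p (x,y)/margX p x) * (Real.sqrt (p (x,y)/margY p y) * w y))^2 := by
            congr 1
            exact Finset.sum_congr rfl fun y _ => (he1 y).symm
        _ ≤ (∑ y, (Real.sqrt (p (x,y)/margX p x))^2) *
            ∑ y, (Real.sqrt (p (x,y)/margY p y) * w y)^2 := hcs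
        _ = (∑ y, p (x,y)/margX p x) * ∑ y, p (x,y)/margY p y * w y^2 := by
            rw [Finset.sum_congr rfl fun y _ => he2 y, Finset.sum_congr rfl fun y _ => he3 y]
        _ = ∑ y, p (x,y)/margY p y * w y^2 := by rw [hsum1, one_mul]
    calc (Q *ᵥ w) ⬝ᵥ (Q *ᵥ w) = ∑ x, (Q *ᵥ w) x * (Q *ᵥ w) x := rfl
      _ ≤ ∑ x, ∑ y, p (x,y) / margY p y * w y ^ 2 := Finset.sum_le_sum fun x _ => hrow x
      _ = ∑ y, ∑ x, p (x,y) / margY p y * w y ^ 2 := Finset.sum_comm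
      _ = ∑ y, w y ^ 2 := by
          refine Finset.sum_congr rfl fun y _ => ?_
          rw [← Finset.sum_mul, ← Finset.sum_div,
            show (∑ x, p (x,y)) = margY p y from rfl, div_self (hY y).ne', one_mul]
      _ = w ⬝ᵥ w := WhitenedAux.sumsq_eq_dot w
  have keyP : ∀ v : Fin K → ℝ, (P *ᵥ v) ⬝ᵥ (P *ᵥ v) ≤ v ⬝ᵥ v := by
    intro v
    have h1 : P *ᵥ v = Aᵀ *ᵥ (Q *ᵥ (B *ᵥ v)) := by
      rw [hPQ, ← mulVec_mulVec, ← mulVec_mulVec]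
    calc (P *ᵥ v) ⬝ᵥ (P *ᵥ v)
        = (Aᵀ *ᵥ (Q *ᵥ (B *ᵥ v))) ⬝ᵥ (Aᵀ *ᵥ (Q *ᵥ (B *ᵥ v))) := by rw [h1]
      _ ≤ (Q *ᵥ (B *ᵥ v)) ⬝ᵥ (Q *ᵥ (B *ᵥ v)) := WhitenedAux.transpose_contraction hA _
      _ ≤ (B *ᵥ v) ⬝ᵥ (B *ᵥ v) := keyQ _
      _ = v ⬝ᵥ v := WhitenedAux.mulVec_isometry hB v
  -- the defining sets
  have zero_mem : ∀ i < K, (0:ℝ) ∈ {t : ℝ | ∃ V : Submodule ℝ (Fin K → ℝ),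
      Module.finrank ℝ ↥V = i + 1 ∧ ∀ v ∈ V, t * euclNorm v ≤ euclNorm (P.mulVec v)} := by
    intro i hi
    obtain ⟨V, hV⟩ := WhitenedAux.exists_subspace hi
    exact ⟨V, hV, fun v _ => by
      rw [zero_mul]; exact WhitenedAux.euclNorm_nonneg' _⟩
  have hsub : ∀ i : ℕ, {t : ℝ | ∃ V : Submodule ℝ (Fin K → ℝ),
      Module.finrank ℝ ↥V = i + 1 ∧ ∀ v ∈ V, t * euclNorm v ≤ euclNorm (P.mulVec v)} ⊆
      {t : ℝ | ∃ V : Submodule ℝ (Y → ℝ),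
      Module.finrank ℝ ↥V = i + 1 ∧ ∀ v ∈ V, t * euclNorm v ≤ euclNorm (Q.mulVec v)} := by
    intro i t ht
    obtain ⟨V, hV, hle⟩ := ht
    refine ⟨V.map B.mulVecLin, by rw [WhitenedAux.finrank_map_eq hB, hV], ?_⟩
    intro w hw
    obtain ⟨v, hvV, rfl⟩ := Submodule.mem_map.1 hw
    have hnorm : euclNorm (B.mulVecLin v) = euclNorm v := by
      unfold euclNorm
      rw [WhitenedAux.sumsq_eq_dot, WhitenedAux.sumsq_eq_dot,
        show B.mulVecLin v = B *ᵥ v from rfl, WhitenedAux.mulVec_isometry hB v]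
    rw [hnorm]
    calc t * euclNorm v ≤ euclNorm (P *ᵥ v) := hle v hvV
      _ = euclNorm (Aᵀ *ᵥ (Q *ᵥ (B *ᵥ v))) := by
          rw [hPQ, ← mulVec_mulVec, ← mulVec_mulVec]
      _ ≤ euclNorm (Q *ᵥ (B *ᵥ v)) :=
          WhitenedAux.euclNorm_le _ _ (WhitenedAux.transpose_contraction hA _)
      _ = euclNorm (Q.mulVec (B.mulVecLin v)) := rfl
  have bddQ : ∀ i : ℕ, BddAbove {t : ℝ | ∃ V : Submodule ℝ (Y → ℝ),
      Module.finrank ℝ ↥V = i + 1 ∧ ∀ v ∈ V, t * euclNorm v ≤ euclNorm (Q.mulVec v)} :=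
    fun i => ⟨1, fun t ht => WhitenedAux.mem_le_one keyQ ht⟩
  have bddP : ∀ i : ℕ, BddAbove {t : ℝ | ∃ V : Submodule ℝ (Fin K → ℝ),
      Module.finrank ℝ ↥V = i + 1 ∧ ∀ v ∈ V, t * euclNorm v ≤ euclNorm (P.mulVec v)} :=
    fun i => ⟨1, fun t ht => WhitenedAux.mem_le_one keyP ht⟩
  refine ⟨?_, ?_, ?_⟩
  · intro i hi
    exact csSup_le_csSup (bddQ i) ⟨0, zero_mem i hi⟩ (hsub i)
  · intro i hi
    constructor
    · exact le_csSup (bddP i) (zero_mem i hi)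
    · exact csSup_le ⟨0, zero_mem i hi⟩ fun t ht => WhitenedAux.mem_le_one keyP ht
  · rw [posSemidef_iff_dotProduct_mulVec]
    constructor
    · show ((1 : Matrix (Fin K) (Fin K) ℝ) - Pᵀ * P)ᴴ = _
      rw [conjTranspose_eq_transpose_of_trivial]
      rw [transpose_sub, transpose_one, transpose_mul, transpose_transpose]
    · intro v
      have hstar : star v = v := by
        funext i; simp
      rw [hstar, sub_mulVec, one_mulVec, dotProduct_sub, ← mulVec_mulVec,
        dotProduct_mulVec, vecMul_transpose]
      have h1 := keyP v
      have h2 : v ⬝ᵥ v - (P *ᵥ v) ⬝ᵥ (P *ᵥ v) ≥ 0 := by linarith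
      linarith [h2]
end

section
/- Let X and Y be finite types, p a joint pmf on X × Y with everywhere-positive marginals p_X and p_Y, Q(x, y) = p(x, y) / √(p_X(x) p_Y(y)), with singular values 1 = σ₁ ≥ σ₂ ≥ … in decreasing order, and let K ≤ min(|X|, |Y|). Then there exist whitened feature maps f : X → ℝ^K and g : Y → ℝ^K (i.e., ∑_x p_X(x) f(x) f(x)ᵀ = I_K and ∑_y p_Y(y) g(y) g(y)ᵀ = I_K) whose cross-correlation matrix P = ∑_{x,y} p(x, y) f(x) g(y)ᵀ equals the diagonal matrix diag(σ₁, …, σ_K), so that det(I_K − PᵀP) = ∏_{k=1}^K (1 − σ_k²); such f and g are obtained by taking f_k(x) = u_k(x)/√(p_X(x)) and g_k(y) = v_k(y)/√(p_Y(y)) where (u_k, v_k) are the top K singular vector pairs of Q. -/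
open Finset Matrix

noncomputable def toE {n : Type*} [Fintype n] (v : n → ℝ) : EuclideanSpace ℝ n :=
  (WithLp.equiv 2 _).symm v

noncomputable def fromE {n : Type*} [Fintype n] (w : EuclideanSpace ℝ n) : n → ℝ :=
  WithLp.equiv 2 _ w

@[simp] lemma fromE_toE {n : Type*} [Fintype n] (v : n → ℝ) : fromE (toE v) = v := rfl
@[simp] lemma toE_fromE {n : Type*} [Fintype n] (w : EuclideanSpace ℝ n) : toE (fromE w) = w := rfl

lemma euclNorm_fromE {n : Type*} [Fintype n] (w : EuclideanSpace ℝ n) :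
    euclNorm (fromE w) = ‖w‖ := by
  rw [EuclideanSpace.norm_eq]; simp [euclNorm, sq_abs, fromE]

lemma euclNorm_toE {n : Type*} [Fintype n] (v : n → ℝ) : euclNorm v = ‖toE v‖ :=
  euclNorm_fromE (toE v)

lemma euclNorm_nonneg {n : Type*} [Fintype n] (v : n → ℝ) : 0 ≤ euclNorm v :=
  Real.sqrt_nonneg _

lemma dot_eq_inner {n : Type*} [Fintype n] (v w : EuclideanSpace ℝ n) :
    fromE v ⬝ᵥ fromE w = (inner ℝ v w : ℝ) := by
  simp [PiLp.inner_apply, dotProduct, RCLike.inner_apply, fromE, mul_comm]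

lemma fromE_sum_smul {Y : Type*} [Fintype Y] {ι : Type*} (s : Finset ι)
    (r : ι → ℝ) (v : ι → EuclideanSpace ℝ Y) :
    fromE (∑ i ∈ s, r i • v i) = ∑ i ∈ s, r i • fromE (v i) := by
  induction s using Finset.cons_induction with
  | empty => rfl
  | cons a s ha ih => rw [Finset.sum_cons, Finset.sum_cons, ← ih]; rfl

lemma parseval {Y : Type*} [Fintype Y]
    (b : OrthonormalBasis (Fin (Fintype.card Y)) ℝ (EuclideanSpace ℝ Y))
    (w : EuclideanSpace ℝ Y) : ‖w‖ ^ 2 = ∑ i, (b.repr w i) ^ 2 := by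
  rw [← b.repr.norm_map w, EuclideanSpace.norm_eq, Real.sq_sqrt (by positivity)]
  simp [sq_abs]

lemma sq_le_sq_imp_le {a b : ℝ} (hb : 0 ≤ b) (h : a ^ 2 ≤ b ^ 2) : a ≤ b := by
  nlinarith [sq_nonneg (a - b), sq_nonneg (a + b)]

lemma normsq_mulVec {X Y : Type*} [Fintype X] [Fintype Y] (M : Matrix X Y ℝ)
    (b : OrthonormalBasis (Fin (Fintype.card Y)) ℝ (EuclideanSpace ℝ Y))
    (μ : Fin (Fintype.card Y) → ℝ)
    (hEig : ∀ i, (Mᵀ * M) *ᵥ fromE (b i) = μ i • fromE (b i))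
    (w : EuclideanSpace ℝ Y) :
    ‖toE (M *ᵥ fromE w)‖ ^ 2 = ∑ i, μ i * (b.repr w i) ^ 2 := by
  have h1 : ‖toE (M *ᵥ fromE w)‖ ^ 2 = (M *ᵥ fromE w) ⬝ᵥ (M *ᵥ fromE w) := by
    rw [← real_inner_self_eq_norm_sq (toE (M *ᵥ fromE w)), ← dot_eq_inner, fromE_toE]
  have h2 : fromE w ⬝ᵥ ((Mᵀ * M) *ᵥ fromE w) = (M *ᵥ fromE w) ⬝ᵥ (M *ᵥ fromE w) := by
    rw [← mulVec_mulVec, Matrix.dotProduct_mulVec, vecMul_transpose]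
  have hw : fromE w = ∑ i, b.repr w i • fromE (b i) := by
    rw [← fromE_sum_smul, b.sum_repr w]
  have h3 : ((Mᵀ * M) *ᵥ fromE w) = ∑ i, (b.repr w i * μ i) • fromE (b i) := by
    conv_lhs => rw [hw]
    rw [← mulVecLin_apply, map_sum]
    refine Finset.sum_congr rfl fun i _ => ?_
    rw [LinearMap.map_smul, mulVecLin_apply, hEig i, smul_smul]
  have hdb : ∀ i, fromE w ⬝ᵥ fromE (b i) = b.repr w i := by
    intro i
    rw [dot_eq_inner, real_inner_comm, ← b.repr_apply_apply]
  rw [h1, ← h2, h3]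
  have happ : ∀ y, (∑ i, (b.repr w i * μ i) • fromE (b i)) y
      = ∑ i, (b.repr w i * μ i) * fromE (b i) y := by
    intro y; rw [Finset.sum_apply]; rfl
  simp only [dotProduct, happ, Finset.mul_sum]
  rw [Finset.sum_comm]
  refine Finset.sum_congr rfl fun i _ => ?_
  have hd := hdb i
  simp only [dotProduct] at hd
  calc ∑ y, fromE w y * (b.repr w i * μ i * fromE (b i) y)
      = (b.repr w i * μ i) * ∑ y, fromE w y * fromE (b i) y := by
        rw [Finset.mul_sum]; exact Finset.sum_congr rfl fun y _ => by ring
    _ = μ i * b.repr w i ^ 2 := by rw [hd]; ring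

lemma repr_sum_smul_eq_zero {Y : Type*} [Fintype Y]
    (b : OrthonormalBasis (Fin (Fintype.card Y)) ℝ (EuclideanSpace ℝ Y))
    {ι : Type*} [Fintype ι] (emb : ι → Fin (Fintype.card Y)) (d : ι → ℝ)
    (i : Fin (Fintype.card Y)) (hi : ∀ j, emb j ≠ i) :
    b.repr (∑ j, d j • b (emb j)) i = 0 := by
  classical
  simp only [map_sum, _root_.map_smul, b.repr_self]
  have : (∑ j, d j • EuclideanSpace.single (emb j) (1:ℝ)) i
      = ∑ j, (d j • EuclideanSpace.single (emb j) (1:ℝ)) i := by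
    rw [WithLp.ofLp_sum, Finset.sum_apply]
  rw [this]
  refine Finset.sum_eq_zero fun j _ => ?_
  simp [EuclideanSpace.single_apply, Ne.symm (hi j)]

lemma courant_fischer {X Y : Type*} [Fintype X] [Fintype Y] (M : Matrix X Y ℝ)
    (b : OrthonormalBasis (Fin (Fintype.card Y)) ℝ (EuclideanSpace ℝ Y))
    (μ : Fin (Fintype.card Y) → ℝ) (hμ0 : ∀ i, 0 ≤ μ i)
    (hmono : ∀ i j : Fin (Fintype.card Y), i ≤ j → μ j ≤ μ i)
    (hEig : ∀ i, (Mᵀ * M) *ᵥ fromE (b i) = μ i • fromE (b i))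
    (k : Fin (Fintype.card Y)) :
    nthSingularValue M (k : ℕ) = Real.sqrt (μ k) := by
  classical
  have key : ∀ w : EuclideanSpace ℝ Y,
      euclNorm (M *ᵥ fromE w) ^ 2 = ∑ i, μ i * (b.repr w i) ^ 2 := fun w => by
    rw [euclNorm_toE]; exact normsq_mulVec M b μ hEig w
  have keyw : ∀ w : EuclideanSpace ℝ Y,
      euclNorm (fromE w) ^ 2 = ∑ i, (b.repr w i) ^ 2 := fun w => by
    rw [euclNorm_fromE]; exact parseval b w
  have hksucc : (k : ℕ) + 1 ≤ Fintype.card Y := k.isLt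
  have hmem : Real.sqrt (μ k) ∈ {t : ℝ | ∃ V : Submodule ℝ (Y → ℝ),
      Module.finrank ℝ ↥V = (k : ℕ) + 1 ∧
      ∀ v ∈ V, t * euclNorm v ≤ euclNorm (M.mulVec v)} := by
    have hortho : Orthonormal ℝ (fun j : Fin ((k:ℕ)+1) => b (Fin.castLE hksucc j)) :=
      b.orthonormal.comp _ (Fin.castLE_injective hksucc)
    have hli : LinearIndependent ℝ
        (fun j : Fin ((k:ℕ)+1) => fromE (b (Fin.castLE hksucc j))) := by
      have h2 := hortho.linearIndependent.map' (WithLp.linearEquiv 2 ℝ (Y → ℝ)).toLinearMap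
        (LinearEquiv.ker _)
      exact h2
    refine ⟨Submodule.span ℝ (Set.range fun j : Fin ((k:ℕ)+1) =>
      fromE (b (Fin.castLE hksucc j))), ?_, ?_⟩
    · rw [finrank_span_eq_card hli, Fintype.card_fin]
    · intro v hv
      rw [Submodule.mem_span_range_iff_exists_fun] at hv
      obtain ⟨d, rfl⟩ := hv
      rw [← fromE_sum_smul]
      set wE : EuclideanSpace ℝ Y := ∑ j, d j • b (Fin.castLE hksucc j) with hwE
      have hz : ∀ i : Fin (Fintype.card Y), (k : ℕ) < (i : ℕ) → b.repr wE i = 0 := by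
        intro i hi
        refine repr_sum_smul_eq_zero b _ d i fun j => ?_
        intro h
        have hj : ((Fin.castLE hksucc j : Fin (Fintype.card Y)) : ℕ) = (j : ℕ) := rfl
        have : (j : ℕ) < (k : ℕ) + 1 := j.isLt
        rw [← h, hj] at hi
        omega
      refine sq_le_sq_imp_le (euclNorm_nonneg _) ?_
      rw [mul_pow, Real.sq_sqrt (hμ0 k), keyw wE, key wE, Finset.mul_sum]
      refine Finset.sum_le_sum fun i _ => ?_
      by_cases hik : (i : ℕ) ≤ (k : ℕ)
      · exact mul_le_mul_of_nonneg_right (hmono i k (Fin.le_def.mpr hik)) (sq_nonneg _)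
      · rw [hz i (by omega)]; simp
  have hub : ∀ t ∈ {t : ℝ | ∃ V : Submodule ℝ (Y → ℝ),
      Module.finrank ℝ ↥V = (k : ℕ) + 1 ∧
      ∀ v ∈ V, t * euclNorm v ≤ euclNorm (M.mulVec v)}, t ≤ Real.sqrt (μ k) := by
    rintro t ⟨V, hdim, hVle⟩
    have hembinj : Function.Injective
        (fun j : Fin (Fintype.card Y - (k:ℕ)) =>
          (⟨(k:ℕ) + (j:ℕ), by omega⟩ : Fin (Fintype.card Y))) := by
      intro a c h
      have h2 : (k:ℕ) + (a:ℕ) = (k:ℕ) + (c:ℕ) := congrArg Fin.val h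
      exact Fin.ext (by omega)
    have hortho : Orthonormal ℝ (fun j : Fin (Fintype.card Y - (k:ℕ)) =>
        b ⟨(k:ℕ) + (j:ℕ), by omega⟩) := b.orthonormal.comp _ hembinj
    have hli : LinearIndependent ℝ (fun j : Fin (Fintype.card Y - (k:ℕ)) =>
        fromE (b ⟨(k:ℕ) + (j:ℕ), by omega⟩)) := by
      have h2 := hortho.linearIndependent.map' (WithLp.linearEquiv 2 ℝ (Y → ℝ)).toLinearMap
        (LinearEquiv.ker _)
      exact h2
    set W : Submodule ℝ (Y → ℝ) := Submodule.span ℝ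
      (Set.range fun j : Fin (Fintype.card Y - (k:ℕ)) =>
        fromE (b ⟨(k:ℕ) + (j:ℕ), by omega⟩)) with hW
    have hWdim : Module.finrank ℝ ↥W = Fintype.card Y - (k:ℕ) := by
      rw [hW, finrank_span_eq_card hli, Fintype.card_fin]
    have htop : Module.finrank ℝ (Y → ℝ) = Fintype.card Y :=
      Module.finrank_fintype_fun_eq_card ℝ
    have hnebot : V ⊓ W ≠ ⊥ := by
      intro hbot
      have hsum := Submodule.finrank_sup_add_finrank_inf_eq V W
      have hle : Module.finrank ℝ ↥(V ⊔ W) ≤ Fintype.card Y := by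
        rw [← htop]; exact Submodule.finrank_le _
      rw [hbot, finrank_bot, hdim, hWdim] at hsum
      omega
    obtain ⟨w, hwVW, hw0⟩ := Submodule.exists_mem_ne_zero_of_ne_bot hnebot
    have hwV : w ∈ V := hwVW.1
    have hwW : w ∈ W := hwVW.2
    -- coefficients of w vanish below k
    have hz : ∀ i : Fin (Fintype.card Y), (i : ℕ) < (k : ℕ) → b.repr (toE w) i = 0 := by
      rw [hW, Submodule.mem_span_range_iff_exists_fun] at hwW
      obtain ⟨d, hd⟩ := hwW
      have hwE : toE w = ∑ j, d j • b ⟨(k:ℕ) + (j:ℕ), by omega⟩ := by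
        have : fromE (∑ j, d j • b (⟨(k:ℕ) + (j:ℕ), by omega⟩ : Fin (Fintype.card Y))) = w := by
          rw [fromE_sum_smul]; exact hd
        rw [← this, toE_fromE]
      intro i hi
      rw [hwE]
      refine repr_sum_smul_eq_zero b _ d i fun j => ?_
      intro h
      have : ((⟨(k:ℕ) + (j:ℕ), by omega⟩ : Fin (Fintype.card Y)) : ℕ) = (k:ℕ) + (j:ℕ) := rfl
      rw [← h, this] at hi
      omega
    have hnormpos : 0 < euclNorm w := by
      rw [euclNorm_toE]
      have : toE w ≠ 0 := by
        intro h
        exact hw0 (by rw [← fromE_toE w, h]; rfl)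
      exact norm_pos_iff.mpr this
    have h1 : t * euclNorm w ≤ euclNorm (M.mulVec w) := hVle w hwV
    have h2 : euclNorm (M.mulVec w) ≤ Real.sqrt (μ k) * euclNorm w := by
      refine sq_le_sq_imp_le (mul_nonneg (Real.sqrt_nonneg _) (euclNorm_nonneg _)) ?_
      rw [mul_pow, Real.sq_sqrt (hμ0 k)]
      have hMv : euclNorm (M.mulVec w) ^ 2 = ∑ i, μ i * (b.repr (toE w) i) ^ 2 := by
        have := key (toE w); rwa [fromE_toE] at this
      have hww : euclNorm w ^ 2 = ∑ i, (b.repr (toE w) i) ^ 2 := by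
        have := keyw (toE w); rwa [fromE_toE] at this
      rw [hMv, hww, Finset.mul_sum]
      refine Finset.sum_le_sum fun i _ => ?_
      by_cases hik : (k : ℕ) ≤ (i : ℕ)
      · exact mul_le_mul_of_nonneg_right (hmono k i (Fin.le_def.mpr hik)) (sq_nonneg _)
      · rw [hz i (by omega)]; simp
    have := le_trans h1 h2
    exact le_of_mul_le_mul_right this hnormpos
  exact IsGreatest.csSup_eq ⟨hmem, hub⟩

lemma exists_svd_basis {X Y : Type*} [Fintype X] [Fintype Y] [DecidableEq Y]
    (M : Matrix X Y ℝ) :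
    ∃ (b : OrthonormalBasis (Fin (Fintype.card Y)) ℝ (EuclideanSpace ℝ Y))
      (μ : Fin (Fintype.card Y) → ℝ),
      (∀ i, 0 ≤ μ i) ∧ (∀ i j, i ≤ j → μ j ≤ μ i) ∧
      (∀ i, (Mᵀ * M) *ᵥ fromE (b i) = μ i • fromE (b i)) := by
  classical
  have hA : (Mᵀ * M).IsHermitian := by
    have := Matrix.isHermitian_conjTranspose_mul_self M
    rwa [Matrix.conjTranspose_eq_transpose_of_trivial] at this
  set n := Fintype.card Y with hn
  let e0 : Fin n ≃ Y := (Fintype.equivFin Y).symm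
  let g : Fin n → ℝ := fun i => -(hA.eigenvalues (e0 i))
  let π := Tuple.sort g
  have hsort : Monotone (g ∘ π) := Tuple.monotone_sort g
  let eq : Fin n ≃ Y := (π : Equiv.Perm (Fin n)).trans e0
  refine ⟨hA.eigenvectorBasis.reindex eq.symm, fun i => hA.eigenvalues (eq i), ?_, ?_, ?_⟩
  · intro i
    set v : Y → ℝ := fromE (hA.eigenvectorBasis (eq i)) with hv
    have hE : (Mᵀ * M) *ᵥ v = hA.eigenvalues (eq i) • v := hA.mulVec_eigenvectorBasis (eq i)
    have hvv : v ⬝ᵥ v = 1 := by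
      rw [hv, dot_eq_inner, real_inner_self_eq_norm_sq,
        hA.eigenvectorBasis.orthonormal.1 (eq i)]
      norm_num
    have h2 : v ⬝ᵥ ((Mᵀ * M) *ᵥ v) = (M *ᵥ v) ⬝ᵥ (M *ᵥ v) := by
      rw [← mulVec_mulVec, Matrix.dotProduct_mulVec, vecMul_transpose]
    have h3 : v ⬝ᵥ ((Mᵀ * M) *ᵥ v) = hA.eigenvalues (eq i) := by
      rw [hE, dotProduct_smul, smul_eq_mul, hvv, mul_one]
    have h4 : 0 ≤ (M *ᵥ v) ⬝ᵥ (M *ᵥ v) := by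
      rw [dotProduct]
      exact Finset.sum_nonneg fun x _ => mul_self_nonneg _
    show 0 ≤ hA.eigenvalues (eq i)
    rw [← h3, h2]; exact h4
  · intro i j hij
    have := hsort hij
    simp only [Function.comp_apply, g] at this
    simp only [eq, Equiv.trans_apply]
    linarith
  · intro i
    have : (hA.eigenvectorBasis.reindex eq.symm) i = hA.eigenvectorBasis (eq i) := by
      rw [OrthonormalBasis.reindex_apply]; simp
    rw [this]
    exact hA.mulVec_eigenvectorBasis (eq i)

@[simp] lemma fromE_smul {n : Type*} [Fintype n] (c : ℝ) (w : EuclideanSpace ℝ n) :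
    fromE (c • w) = c • fromE w := rfl

@[simp] lemma fromE_zero {n : Type*} [Fintype n] : fromE (0 : EuclideanSpace ℝ n) = 0 := rfl

lemma dot_self_zero {n : Type*} [Fintype n] (a : n → ℝ) (h : a ⬝ᵥ a = 0) : a = 0 := by
  have h1 : a ⬝ᵥ a = (inner ℝ (toE a) (toE a) : ℝ) := by rw [← dot_eq_inner]; rfl
  have h2 : toE a = 0 := by
    have := inner_self_eq_zero (𝕜 := ℝ) (x := toE a)
    rw [← this, ← h1, h]
  calc a = fromE (toE a) := rfl
    _ = 0 := by rw [h2]; rfl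

lemma exists_left_vectors {X Y : Type*} [Fintype X] [Fintype Y] (M : Matrix X Y ℝ)
    (b : OrthonormalBasis (Fin (Fintype.card Y)) ℝ (EuclideanSpace ℝ Y))
    (μ : Fin (Fintype.card Y) → ℝ) (hμ0 : ∀ i, 0 ≤ μ i)
    (hEig : ∀ i, (Mᵀ * M) *ᵥ fromE (b i) = μ i • fromE (b i))
    {K : ℕ} (hKY : K ≤ Fintype.card Y) (hKX : K ≤ Fintype.card X) :
    ∃ u : Fin K → EuclideanSpace ℝ X,
      (∀ k l, fromE (u k) ⬝ᵥ fromE (u l) = if k = l then 1 else 0) ∧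
      (∀ l, M *ᵥ fromE (b (Fin.castLE hKY l))
        = Real.sqrt (μ (Fin.castLE hKY l)) • fromE (u l)) := by
  classical
  have hQQ : ∀ l l' : Fin K,
      (M *ᵥ fromE (b (Fin.castLE hKY l))) ⬝ᵥ (M *ᵥ fromE (b (Fin.castLE hKY l')))
      = if l = l' then μ (Fin.castLE hKY l') else 0 := by
    intro l l'
    have h2 : fromE (b (Fin.castLE hKY l)) ⬝ᵥ ((Mᵀ * M) *ᵥ fromE (b (Fin.castLE hKY l')))
        = (M *ᵥ fromE (b (Fin.castLE hKY l))) ⬝ᵥ (M *ᵥ fromE (b (Fin.castLE hKY l'))) := by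
      rw [← mulVec_mulVec, Matrix.dotProduct_mulVec, vecMul_transpose]
    rw [← h2, hEig, dotProduct_smul, smul_eq_mul, dot_eq_inner,
      orthonormal_iff_ite.mp b.orthonormal]
    by_cases h : l = l'
    · simp [h]
    · have : Fin.castLE hKY l ≠ Fin.castLE hKY l' := fun hc => h (Fin.castLE_injective hKY hc)
      simp [h, this]
  set σ : Fin K → ℝ := fun l => Real.sqrt (μ (Fin.castLE hKY l)) with hσ
  set u0 : Fin K → EuclideanSpace ℝ X :=
    fun l => (σ l)⁻¹ • toE (M *ᵥ fromE (b (Fin.castLE hKY l))) with hu0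
  set w : Fin (Fintype.card X) → EuclideanSpace ℝ X :=
    fun i => if h : (i : ℕ) < K then u0 ⟨(i : ℕ), h⟩ else 0 with hw
  set s : Set (Fin (Fintype.card X)) :=
    {i | ∃ h : (i : ℕ) < K, 0 < μ (Fin.castLE hKY ⟨(i : ℕ), h⟩)} with hs
  have hinner_u0 : ∀ l l' : Fin K, 0 < μ (Fin.castLE hKY l) → 0 < μ (Fin.castLE hKY l') →
      (inner ℝ (u0 l) (u0 l') : ℝ) = if l = l' then 1 else 0 := by
    intro l l' hl hl'
    rw [hu0]
    simp only [real_inner_smul_left, real_inner_smul_right]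
    have hd : (inner ℝ (toE (M *ᵥ fromE (b (Fin.castLE hKY l))))
        (toE (M *ᵥ fromE (b (Fin.castLE hKY l')))) : ℝ)
        = if l = l' then μ (Fin.castLE hKY l') else 0 := by
      rw [← dot_eq_inner, fromE_toE, fromE_toE]; exact hQQ l l'
    rw [hd]
    by_cases h : l = l'
    · subst h
      simp only [if_pos rfl]
      have hσpos : 0 < σ l := Real.sqrt_pos.mpr hl
      have hσsq : σ l * σ l = μ (Fin.castLE hKY l) := Real.mul_self_sqrt (hμ0 _)
      field_simp
      simp only [↓reduceIte, mul_one, sq]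
      linarith [hσsq]
    · simp [h]
  have hOrtho : Orthonormal ℝ (s.restrict w) := by
    rw [orthonormal_iff_ite]
    rintro ⟨i, hi⟩ ⟨j, hj⟩
    obtain ⟨hiK, hiμ⟩ := hi
    obtain ⟨hjK, hjμ⟩ := hj
    have hwi : s.restrict w ⟨i, ⟨hiK, hiμ⟩⟩ = u0 ⟨(i : ℕ), hiK⟩ := by
      exact dif_pos hiK
    have hwj : s.restrict w ⟨j, ⟨hjK, hjμ⟩⟩ = u0 ⟨(j : ℕ), hjK⟩ := by
      exact dif_pos hjK
    rw [hwi, hwj, hinner_u0 _ _ hiμ hjμ]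
    have : (⟨(i : ℕ), hiK⟩ : Fin K) = ⟨(j : ℕ), hjK⟩ ↔
        (⟨i, ⟨hiK, hiμ⟩⟩ : s) = ⟨j, ⟨hjK, hjμ⟩⟩ := by
      constructor
      · intro h; have h2 : (i : ℕ) = (j : ℕ) := congrArg (fun z : Fin K => (z : ℕ)) h
        exact Subtype.ext (Fin.ext h2)
      · intro h
        have h2 : (i : ℕ) = (j : ℕ) :=
          congrArg (fun z : Fin (Fintype.card X) => (z : ℕ)) (congrArg Subtype.val h)
        exact Fin.ext h2
    by_cases h : (⟨(i : ℕ), hiK⟩ : Fin K) = ⟨(j : ℕ), hjK⟩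
    · rw [if_pos h, if_pos (this.mp h)]
    · rw [if_neg h, if_neg (fun hc => h (this.mpr hc))]
  obtain ⟨bX, hbX⟩ := hOrtho.exists_orthonormalBasis_extension_of_card_eq
    (by rw [finrank_euclideanSpace, Fintype.card_fin])
  refine ⟨fun l => bX (Fin.castLE hKX l), ?_, ?_⟩
  · intro k l
    rw [dot_eq_inner, orthonormal_iff_ite.mp bX.orthonormal]
    by_cases h : k = l
    · simp [h]
    · have : Fin.castLE hKX k ≠ Fin.castLE hKX l := fun hc => h (Fin.castLE_injective hKX hc)
      simp [h, this]
  · intro l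
    by_cases hpos : 0 < μ (Fin.castLE hKY l)
    · have hiK : ((Fin.castLE hKX l : Fin (Fintype.card X)) : ℕ) < K := l.isLt
      have hfin : (⟨((Fin.castLE hKX l : Fin (Fintype.card X)) : ℕ), hiK⟩ : Fin K) = l :=
        Fin.ext rfl
      have hmem : (Fin.castLE hKX l : Fin (Fintype.card X)) ∈ s := by
        refine ⟨hiK, ?_⟩
        rw [hfin]; exact hpos
      have h1 : bX (Fin.castLE hKX l) = w (Fin.castLE hKX l) := hbX _ hmem
      have h2 : w (Fin.castLE hKX l) = u0 l := by
        simp only [hw, dif_pos hiK]; rw [hfin]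
      have hσpos : 0 < σ l := Real.sqrt_pos.mpr hpos
      show M *ᵥ fromE (b (Fin.castLE hKY l)) = σ l • fromE (bX (Fin.castLE hKX l))
      rw [h1, h2]
      simp only [hu0, fromE_smul, fromE_toE]
      rw [smul_smul, mul_inv_cancel₀ (ne_of_gt hσpos), one_smul]
    · have hz : μ (Fin.castLE hKY l) = 0 := le_antisymm (not_lt.mp hpos) (hμ0 _)
      have hMv : M *ᵥ fromE (b (Fin.castLE hKY l)) = 0 := by
        apply dot_self_zero
        rw [hQQ l l, if_pos rfl, hz]
      rw [hMv, hz, Real.sqrt_zero, zero_smul]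

/-- attainment of the FMCA optimum, Proposition 2. For
`K ≤ min(|X|, |Y|)` there exist whitened feature maps `f : X → ℝ^K`, `g : Y → ℝ^K`
(obtained from the top `K` singular vector pairs of `Q` rescaled by `1/√p_X`,
`1/√p_Y`) whose cross-correlation matrix `P` equals `diag(σ₁, …, σ_K)`, so that
`det(I_K − PᵀP) = ∏_{k=1}^K (1 − σₖ²)`. -/
theorem fmca_objective_attained {X Y : Type*} [Fintype X] [Fintype Y] {K : ℕ}
    (p : X × Y → ℝ) (hp0 : ∀ z, 0 ≤ p z) (hp1 : ∑ z : X × Y, p z = 1)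
    (hX : ∀ x, 0 < margX p x) (hY : ∀ y, 0 < margY p y)
    (Q : Matrix X Y ℝ)
    (hQ : ∀ x y, Q x y = p (x, y) / Real.sqrt (margX p x * margY p y))
    (hK : K ≤ min (Fintype.card X) (Fintype.card Y)) :
    ∃ f : X → Fin K → ℝ, ∃ g : Y → Fin K → ℝ,
      (∑ x, margX p x • vecMulVec (f x) (f x) = (1 : Matrix (Fin K) (Fin K) ℝ)) ∧
      (∑ y, margY p y • vecMulVec (g y) (g y) = (1 : Matrix (Fin K) (Fin K) ℝ)) ∧
      (∑ x, ∑ y, p (x, y) • vecMulVec (f x) (g y) =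
        Matrix.diagonal fun k : Fin K => nthSingularValue Q (k : ℕ)) ∧
      ((1 : Matrix (Fin K) (Fin K) ℝ) -
          (Matrix.diagonal fun k : Fin K => nthSingularValue Q (k : ℕ))ᵀ *
            (Matrix.diagonal fun k : Fin K => nthSingularValue Q (k : ℕ))).det =
        ∏ k ∈ Finset.range K, (1 - nthSingularValue Q k ^ 2) := by
  classical
  have hKX : K ≤ Fintype.card X := hK.trans (min_le_left _ _)
  have hKY : K ≤ Fintype.card Y := hK.trans (min_le_right _ _)
  obtain ⟨b, μ, hμ0, hmono, hEig⟩ := exists_svd_basis Q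
  obtain ⟨u, hu, hMv⟩ := exists_left_vectors Q b μ hμ0 hEig hKY hKX
  have hσ : ∀ l : Fin K, nthSingularValue Q (l : ℕ) = Real.sqrt (μ (Fin.castLE hKY l)) :=
    fun l => courant_fischer Q b μ hμ0 hmono hEig (Fin.castLE hKY l)
  have hv : ∀ k l : Fin K, fromE (b (Fin.castLE hKY k)) ⬝ᵥ fromE (b (Fin.castLE hKY l))
      = if k = l then 1 else 0 := by
    intro k l
    rw [dot_eq_inner, orthonormal_iff_ite.mp b.orthonormal]
    by_cases h : k = l
    · simp [h]
    · have hne : Fin.castLE hKY k ≠ Fin.castLE hKY l := fun hc => h (Fin.castLE_injective hKY hc)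
      simp [h, hne]
  refine ⟨fun x k => (Real.sqrt (margX p x))⁻¹ * fromE (u k) x,
          fun y k => (Real.sqrt (margY p y))⁻¹ * fromE (b (Fin.castLE hKY k)) y, ?_, ?_, ?_, ?_⟩
  · ext k l
    rw [Matrix.sum_apply]
    simp only [Matrix.smul_apply, vecMulVec_apply, smul_eq_mul]
    have h1 : ∀ x, margX p x * ((Real.sqrt (margX p x))⁻¹ * fromE (u k) x *
        ((Real.sqrt (margX p x))⁻¹ * fromE (u l) x)) = fromE (u k) x * fromE (u l) x := by
      intro x
      have hx : 0 < Real.sqrt (margX p x) := Real.sqrt_pos.mpr (hX x)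
      have hsq : Real.sqrt (margX p x) * Real.sqrt (margX p x) = margX p x :=
        Real.mul_self_sqrt (hX x).le
      rw [← hsq]
      field_simp
      rw [Real.sqrt_sq hx.le]
    calc ∑ x, margX p x * ((Real.sqrt (margX p x))⁻¹ * fromE (u k) x *
          ((Real.sqrt (margX p x))⁻¹ * fromE (u l) x))
        = ∑ x, fromE (u k) x * fromE (u l) x := Finset.sum_congr rfl fun x _ => h1 x
      _ = (1 : Matrix (Fin K) (Fin K) ℝ) k l := by
          rw [show ∑ x, fromE (u k) x * fromE (u l) x = fromE (u k) ⬝ᵥ fromE (u l) from rfl,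
            hu k l, Matrix.one_apply]
  · ext k l
    rw [Matrix.sum_apply]
    simp only [Matrix.smul_apply, vecMulVec_apply, smul_eq_mul]
    have h1 : ∀ y, margY p y * ((Real.sqrt (margY p y))⁻¹ * fromE (b (Fin.castLE hKY k)) y *
        ((Real.sqrt (margY p y))⁻¹ * fromE (b (Fin.castLE hKY l)) y))
        = fromE (b (Fin.castLE hKY k)) y * fromE (b (Fin.castLE hKY l)) y := by
      intro y
      have hy : 0 < Real.sqrt (margY p y) := Real.sqrt_pos.mpr (hY y)
      have hsq : Real.sqrt (margY p y) * Real.sqrt (margY p y) = margY p y :=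
        Real.mul_self_sqrt (hY y).le
      rw [← hsq]
      field_simp
      rw [Real.sqrt_sq hy.le]
    calc ∑ y, margY p y * ((Real.sqrt (margY p y))⁻¹ * fromE (b (Fin.castLE hKY k)) y *
          ((Real.sqrt (margY p y))⁻¹ * fromE (b (Fin.castLE hKY l)) y))
        = ∑ y, fromE (b (Fin.castLE hKY k)) y * fromE (b (Fin.castLE hKY l)) y :=
          Finset.sum_congr rfl fun y _ => h1 y
      _ = (1 : Matrix (Fin K) (Fin K) ℝ) k l := by
          rw [show ∑ y, fromE (b (Fin.castLE hKY k)) y * fromE (b (Fin.castLE hKY l)) y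
            = fromE (b (Fin.castLE hKY k)) ⬝ᵥ fromE (b (Fin.castLE hKY l)) from rfl,
            hv k l, Matrix.one_apply]
  · ext k l
    rw [Matrix.sum_apply]
    have hrow : ∀ x, (∑ y, p (x, y) • vecMulVec
        (fun k => (Real.sqrt (margX p x))⁻¹ * fromE (u k) x)
        (fun k => (Real.sqrt (margY p y))⁻¹ * fromE (b (Fin.castLE hKY k)) y)) k l
        = ∑ y, Q x y * (fromE (u k) x * fromE (b (Fin.castLE hKY l)) y) := by
      intro x
      rw [Matrix.sum_apply]
      refine Finset.sum_congr rfl fun y _ => ?_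
      simp only [Matrix.smul_apply, vecMulVec_apply, smul_eq_mul]
      have hx : 0 < Real.sqrt (margX p x) := Real.sqrt_pos.mpr (hX x)
      have hy : 0 < Real.sqrt (margY p y) := Real.sqrt_pos.mpr (hY y)
      have hp : p (x, y) = Q x y * (Real.sqrt (margX p x) * Real.sqrt (margY p y)) := by
        rw [hQ x y, Real.sqrt_mul (hX x).le]
        field_simp
      rw [hp]
      field_simp
    calc ∑ x, (∑ y, p (x, y) • vecMulVec
          (fun k => (Real.sqrt (margX p x))⁻¹ * fromE (u k) x)
          (fun k => (Real.sqrt (margY p y))⁻¹ * fromE (b (Fin.castLE hKY k)) y)) k l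
        = ∑ x, ∑ y, Q x y * (fromE (u k) x * fromE (b (Fin.castLE hKY l)) y) :=
          Finset.sum_congr rfl fun x _ => hrow x
      _ = fromE (u k) ⬝ᵥ (Q *ᵥ fromE (b (Fin.castLE hKY l))) := by
          rw [dotProduct]
          refine Finset.sum_congr rfl fun x _ => ?_
          have : (Q *ᵥ fromE (b (Fin.castLE hKY l))) x
              = ∑ y, Q x y * fromE (b (Fin.castLE hKY l)) y := rfl
          rw [this, Finset.mul_sum]
          exact Finset.sum_congr rfl fun y _ => by ring
      _ = Real.sqrt (μ (Fin.castLE hKY l)) * (fromE (u k) ⬝ᵥ fromE (u l)) := by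
          rw [hMv l, dotProduct_smul, smul_eq_mul]
      _ = Matrix.diagonal (fun k : Fin K => nthSingularValue Q (k : ℕ)) k l := by
          rw [hu k l, Matrix.diagonal_apply]
          by_cases h : k = l
          · subst h; rw [if_pos rfl, if_pos rfl, mul_one, hσ k]
          · rw [if_neg h, if_neg h, mul_zero]
  · rw [Matrix.diagonal_transpose, Matrix.diagonal_mul_diagonal, ← Matrix.diagonal_one,
      Matrix.diagonal_sub, Matrix.det_diagonal]
    calc ∏ k : Fin K, (1 - nthSingularValue Q (k : ℕ) * nthSingularValue Q (k : ℕ))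
        = ∏ k : Fin K, (1 - nthSingularValue Q (k : ℕ) ^ 2) := by
          refine Finset.prod_congr rfl fun k _ => ?_
          rw [sq]
      _ = ∏ k ∈ Finset.range K, (1 - nthSingularValue Q k ^ 2) :=
          Fin.prod_univ_eq_prod_range (fun i => 1 - nthSingularValue Q i ^ 2) K
end
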